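/- Let φ_j : F_j → F_{j+1} (j = 1, …, k) be consecutive transformations, φ_j of type |α^j| —σ_j→ n_j ←τ_j— |α^{j+1}|, and suppose the type of the vertical composite φ_k ∘ ⋯ ∘ φ₁ is computed by the iterated pasting of pushout squares of the τ_j's against the σ_{j+1}'s, with vertex l; let ξ_j : n_j → l denote the induced map (independent of the path chosen in the pasting diagram). Let Γ(φ_k) ∘ ⋯ ∘ Γ(φ₁) be the composite graph obtained by gluing the standard graphs of the φ_j's along the places corresponding to the common interface functors F₂, …, F_k. If the i-th connected component of Γ(φ_k) ∘ ⋯ ∘ Γ(φ₁) is acyclic and, for every j ∈ {1, …, k} and every x ∈ ξ_j⁻¹{i}, the transformation φ_j is dinatural in its x-th variable, then φ_k ∘ ⋯ ∘ φ₁ is dinatural in its i-th variable. -/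

import Mathlib

open CategoryTheory Opposite

universe v u v' u'

/-- `SignObj B s` is `B` if the sign `s` is `true` (covariant) and `Bᵒᵖ` if `s` is `false`. -/
def SignObj (B : Type u) : Bool → Type u
  | true => B
  | false => Bᵒᵖ

instance signObjCategory (B : Type u) [Category.{v} B] : ∀ s : Bool, Category.{v} (SignObj B s)
  | true => inferInstanceAs (Category.{v} B)
  | false => inferInstanceAs (Category.{v} Bᵒᵖ)

/-- Interpret an object of `B` as an object of `B` or `Bᵒᵖ`, according to a sign. -/
def toSign {B : Type u} : ∀ s : Bool, B → SignObj B s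
  | true, X => X
  | false, X => op X

/-- Forget the sign of an object. -/
def unSign {B : Type u} : ∀ {s : Bool}, SignObj B s → B
  | true, X => X
  | false, X => unop X

/-- A morphism of `B`, pointing in a direction prescribed by a sign. -/
def SignHom {B : Type u} [Category.{v} B] : Bool → B → B → Type v
  | true, X, Y => X ⟶ Y
  | false, X, Y => Y ⟶ X

def toSignHom {B : Type u} [Category.{v} B] : ∀ {s : Bool} {X Y : B},
    SignHom s X Y → (toSign s X ⟶ toSign s Y)
  | true, _, _, f => f
  | false, _, _, f => f.op

def signId {B : Type u} [Category.{v} B] : ∀ (s : Bool) (X : B), SignHom s X X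
  | true, X => 𝟙 X
  | false, X => 𝟙 X

/-- The mixed-variance power category `B^α`. -/
abbrev PowCat (B : Type u) [Category.{v} B] {κ : Type} (α : κ → Bool) : Type u :=
  ∀ j : κ, SignObj B (α j)

/-- The object of `B^α` whose `j`-th entry is `A (σ j)`. -/
abbrev tup {B : Type u} [Category.{v} B] {κ ι : Type} (α : κ → Bool) (σ : κ → ι)
    (A : ι → B) : PowCat B α :=
  fun j => toSign (α j) (A (σ j))

/-- A transformation `φ : F → G` of type `σ, τ`: a family of morphisms
`φ_𝐀 : F (𝐀 σ) ⟶ G (𝐀 τ)` indexed by tuples `𝐀` of objects of `B`. -/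
def Transf {B : Type u} [Category.{v} B] {C : Type u'} [Category.{v'} C] {κa κb ι : Type}
    (α : κa → Bool) (β : κb → Bool) (F : PowCat B α ⥤ C) (G : PowCat B β ⥤ C)
    (σ : κa → ι) (τ : κb → ι) : Type _ :=
  ∀ A : ι → B, F.obj (tup α σ A) ⟶ G.obj (tup β τ A)

/-- The tuple `A` with its `i`-th entry replaced by `X`. -/
abbrev upd {ι : Type} [DecidableEq ι] {B : Type u} (A : ι → B) (i : ι) (X : B) : ι → B :=
  fun k => if k = i then X else A k

/-- The mixed-variance tuple `𝐀[X,Y/i]σ`: entries over the `i`-th variable are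
`e false` in contravariant positions, `e true` in covariant ones. -/
abbrev tupMV {B : Type u} [Category.{v} B] {κ ι : Type} [DecidableEq ι] (α : κ → Bool)
    (σ : κ → ι) (A : ι → B) (i : ι) (e : Bool → B) : PowCat B α :=
  fun j => toSign (α j) (if σ j = i then e (α j) else A (σ j))

def mvHom {B : Type u} [Category.{v} B] {e₁ e₂ : Bool → B}
    (g : e₂ false ⟶ e₁ false) (h : e₁ true ⟶ e₂ true) :
    ∀ s : Bool, SignHom s (e₁ s) (e₂ s)
  | true => h
  | false => g

/-- The canonical morphism `tupMV α σ A i e₁ ⟶ tupMV α σ A i e₂` acting by `h` on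
covariant entries over `i`, (the opposite of) `g` on contravariant entries over `i`, and
the identity elsewhere. -/
def tupMVHom {B : Type u} [Category.{v} B] {κ ι : Type} [DecidableEq ι] (α : κ → Bool)
    (σ : κ → ι) (A : ι → B) (i : ι) (e₁ e₂ : Bool → B)
    (g : e₂ false ⟶ e₁ false) (h : e₁ true ⟶ e₂ true) :
    tupMV α σ A i e₁ ⟶ tupMV α σ A i e₂ :=
  fun j => toSignHom
    (show SignHom (α j) (if σ j = i then e₁ (α j) else A (σ j))
        (if σ j = i then e₂ (α j) else A (σ j)) from
      if hj : σ j = i then by simp only [if_pos hj]; exact mvHom g h (α j)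
      else by simp only [if_neg hj]; exact signId (α j) (A (σ j)))

/-- Dinaturality of a transformation in its `i`-th variable. -/
def DinatAt {B : Type u} [Category.{v} B] {C : Type u'} [Category.{v'} C] {κa κb ι : Type}
    [DecidableEq ι] {α : κa → Bool} {β : κb → Bool} {F : PowCat B α ⥤ C} {G : PowCat B β ⥤ C}
    {σ : κa → ι} {τ : κb → ι} (φ : Transf α β F G σ τ) (i : ι) : Prop :=
  ∀ (A : ι → B) {X Y : B} (f : X ⟶ Y),
    F.map (tupMVHom α σ A i (fun s => bif s then X else Y) (fun _ => X) f (𝟙 X)) ≫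
        φ (upd A i X) ≫
        G.map (tupMVHom β τ A i (fun _ => X) (fun s => bif s then Y else X) (𝟙 X) f) =
      F.map (tupMVHom α σ A i (fun s => bif s then X else Y) (fun _ => Y) (𝟙 Y) f) ≫
        φ (upd A i Y) ≫
        G.map (tupMVHom β τ A i (fun _ => Y) (fun s => bif s then Y else X) f (𝟙 Y))

/-- Vertical composition of transformations along a cocone `ζ, ξ` on their types. -/
def vcomp {B : Type u} [Category.{v} B] {C : Type u'} [Category.{v'} C]
    {κa κb κc ι₁ ι₂ ι : Type} {α : κa → Bool} {β : κb → Bool} {γ : κc → Bool}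
    {F : PowCat B α ⥤ C} {G : PowCat B β ⥤ C} {H : PowCat B γ ⥤ C}
    {σ : κa → ι₁} {τ : κb → ι₁} {η : κb → ι₂} {θ : κc → ι₂}
    (φ : Transf α β F G σ τ) (ψ : Transf β γ G H η θ)
    (ζ : ι₁ → ι) (ξ : ι₂ → ι) (hcomm : ∀ p, ζ (τ p) = ξ (η p)) :
    Transf α γ F H (fun p => ζ (σ p)) (fun p => ξ (θ p)) :=
  fun A =>
    φ (fun x => A (ζ x)) ≫
      eqToHom (congrArg G.obj (by
        funext j
        show toSign (β j) (A (ζ (τ j))) = toSign (β j) (A (ξ (η j)))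
        rw [hcomm j])) ≫
      ψ (fun x => A (ξ x))

section Chain

variable {B : Type u} [Category.{v} B] {C : Type u'} [Category.{v'} C]
  {w : ℕ → ℕ} {α : ∀ j : ℕ, Fin (w j) → Bool} {n : ℕ → ℕ} {l : ℕ}
  (F : ∀ j : ℕ, PowCat B (α j) ⥤ C)
  (σ : ∀ j : ℕ, Fin (w j) → Fin (n j))
  (τ : ∀ j : ℕ, Fin (w (j + 1)) → Fin (n j))
  (ξ : ∀ j : ℕ, Fin (n j) → Fin l)

/-- The reindexed tuple at stage `j` of a chain of consecutive transformations. -/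
def Tm (A : Fin l → B) : ∀ j : ℕ, PowCat B (α j)
  | 0 => tup (α 0) (fun p => ξ 0 (σ 0 p)) A
  | j + 1 => tup (α (j + 1)) (fun p => ξ j (τ j p)) A

theorem Tm_bridge {k : ℕ}
    (hcomm : ∀ j, j < k → ∀ p, ξ j (τ j p) = ξ (j + 1) (σ (j + 1) p))
    (A : Fin l → B) : ∀ j, j ≤ k → Tm σ τ ξ A j = tup (α j) (σ j) (fun x => A (ξ j x))
  | 0, _ => rfl
  | j + 1, hj => by
      funext p
      show toSign (α (j + 1) p) (A (ξ j (τ j p))) =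
        toSign (α (j + 1) p) (A (ξ (j + 1) (σ (j + 1) p)))
      rw [hcomm j hj p]

variable (φ : ∀ j : ℕ, Transf (α j) (α (j + 1)) (F j) (F (j + 1)) (σ j) (τ j))

/-- The partial vertical composite `φ_{j-1} ∘ ⋯ ∘ φ_0` of a chain of consecutive
transformations, reindexed along the cocone `ξ`. -/
def chain {k : ℕ} (hcomm : ∀ j, j < k → ∀ p, ξ j (τ j p) = ξ (j + 1) (σ (j + 1) p))
    (A : Fin l → B) : ∀ j : ℕ, j ≤ k + 1 → ((F 0).obj (Tm σ τ ξ A 0) ⟶ (F j).obj (Tm σ τ ξ A j))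
  | 0, _ => 𝟙 _
  | j + 1, hj =>
      chain hcomm A j (Nat.le_of_succ_le hj) ≫
        eqToHom (congrArg (F j).obj (Tm_bridge σ τ ξ hcomm A j (Nat.lt_succ_iff.mp hj))) ≫
        φ j (fun x => A (ξ j x))

/-- The full vertical composite `φ_k ∘ ⋯ ∘ φ_0`, as a transformation. -/
def chainTransf (k : ℕ) (hcomm : ∀ j, j < k → ∀ p, ξ j (τ j p) = ξ (j + 1) (σ (j + 1) p)) :
    Transf (α 0) (α (k + 1)) (F 0) (F (k + 1))
      (fun p => ξ 0 (σ 0 p)) (fun p => ξ k (τ k p)) :=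
  fun A => chain F σ τ ξ φ hcomm A (k + 1) (le_refl _)

end Chain

section ChainGraph

variable {w : ℕ → ℕ} {n : ℕ → ℕ} {l : ℕ}

/-- Vertices of the composite graph of a chain of transformations: places are the
arguments of the functors `F_j`, transitions the variables of the `φ_j`. -/
abbrev ChainV (w n : ℕ → ℕ) : Type := ((j : ℕ) × Fin (w j)) ⊕ ((j : ℕ) × Fin (n j))

/-- The arcs of the composite graph `Γ(φ_k) ∘ ⋯ ∘ Γ(φ_0)`. -/
def chainArc (k : ℕ) (α : ∀ j : ℕ, Fin (w j) → Bool)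
    (σ : ∀ j : ℕ, Fin (w j) → Fin (n j)) (τ : ∀ j : ℕ, Fin (w (j + 1)) → Fin (n j)) :
    ChainV w n → ChainV w n → Prop
  | .inl ⟨j', p⟩, .inr ⟨j, t⟩ =>
      j ≤ k ∧ ((∃ h : j' = j, σ j (h ▸ p) = t ∧ α j' p = true) ∨
               (∃ h : j' = j + 1, τ j (h ▸ p) = t ∧ α j' p = false))
  | .inr ⟨j, t⟩, .inl ⟨j', p⟩ =>
      j ≤ k ∧ ((∃ h : j' = j, σ j (h ▸ p) = t ∧ α j' p = false) ∨
               (∃ h : j' = j + 1, τ j (h ▸ p) = t ∧ α j' p = true))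
  | _, _ => False

/-- The connected component to which each vertex of the composite chain graph
belongs. -/
def chainCompOf (σ : ∀ j : ℕ, Fin (w j) → Fin (n j)) (τ : ∀ j : ℕ, Fin (w (j + 1)) → Fin (n j))
    (ξ : ∀ j : ℕ, Fin (n j) → Fin l) : ChainV w n → Fin l
  | .inl ⟨0, p⟩ => ξ 0 (σ 0 p)
  | .inl ⟨j + 1, p⟩ => ξ j (τ j p)
  | .inr ⟨j, t⟩ => ξ j t

end ChainGraph
section SignAlgebra

variable {B : Type u} [Category.{v} B]

/-- Composition of sign-homs. -/
def scomp : ∀ {s : Bool} {a b c : B}, SignHom s a b → SignHom s b c → SignHom s a c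
  | true, _, _, _, g, h => g ≫ h
  | false, _, _, _, g, h => h ≫ g

lemma toSignHom_true {a b : B} (v : SignHom true a b) : toSignHom v = v := rfl

lemma toSignHom_false {a b : B} (v : SignHom false a b) :
    toSignHom v = (v : b ⟶ a).op := rfl

lemma toSignHom_scomp {s : Bool} {a b c : B} (g : SignHom s a b) (h : SignHom s b c) :
    toSignHom (scomp g h) = toSignHom g ≫ toSignHom h := by
  cases s
  · exact op_comp ..
  · rfl

lemma toSignHom_signId {s : Bool} (a : B) : toSignHom (signId s a) = 𝟙 (toSign s a) := by
  cases s <;> rfl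

/-- Cast a sign-hom along equalities of endpoints. -/
def scast {s : Bool} {a b a' b' : B} (ha : a = a') (hb : b = b') (v : SignHom s a b) :
    SignHom s a' b' := ha ▸ hb ▸ v

lemma toSignHom_scast {s : Bool} {a b a' b' : B} (ha : a = a') (hb : b = b')
    (v : SignHom s a b) :
    toSignHom (scast ha hb v) =
      eqToHom (congrArg (toSign s) ha).symm ≫ toSignHom v ≫ eqToHom (congrArg (toSign s) hb) := by
  subst ha; subst hb; simp [scast]

lemma mpr_heq {A A' : Sort _} (e : A = A') (v : A') : HEq (Eq.mpr e v) v := by subst e; rfl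

lemma toSignHom_eq_of_heq {s : Bool} {a b a' b' : B} (ha : a = a') (hb : b = b')
    {v : SignHom s a b} {v' : SignHom s a' b'} (hv : HEq v' v) :
    toSignHom v' =
      eqToHom (congrArg (toSign s) ha).symm ≫ toSignHom v ≫ eqToHom (congrArg (toSign s) hb) := by
  subst ha; subst hb; cases hv; simp

end SignAlgebra

section Pi

variable {B : Type u} [Category.{v} B] {κ : Type} {αs : κ → Bool}

lemma pcomp_app {Xo Yo Zo : PowCat B αs} (fm : Xo ⟶ Yo) (g : Yo ⟶ Zo) (p : κ) :
    (fm ≫ g) p = fm p ≫ g p := rfl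

lemma peq_app {Xo Yo : PowCat B αs} (h : Xo = Yo) (p : κ) :
    (eqToHom h : Xo ⟶ Yo) p = eqToHom (congrFun h p) := by subst h; rfl

end Pi

section TupMV

variable {B : Type u} [Category.{v} B] {κ ι : Type} [DecidableEq ι] (α : κ → Bool)
  (σ : κ → ι) (A : ι → B) (i : ι) (e₁ e₂ : Bool → B)
  (g : e₂ false ⟶ e₁ false) (h : e₁ true ⟶ e₂ true)

lemma tupMVHom_app_pos {p : κ} (hp : σ p = i) :
    (tupMVHom α σ A i e₁ e₂ g h : tupMV α σ A i e₁ ⟶ tupMV α σ A i e₂) p =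
      eqToHom (congrArg (toSign (α p)) (if_pos hp)) ≫ toSignHom (mvHom g h (α p)) ≫
        eqToHom (congrArg (toSign (α p)) (if_pos hp)).symm := by
  simp only [tupMVHom, hp, dite_true]
  exact toSignHom_eq_of_heq
    ((if_pos hp : (if σ p = i then e₁ (α p) else A (σ p)) = e₁ (α p)).symm)
    ((if_pos hp : (if σ p = i then e₂ (α p) else A (σ p)) = e₂ (α p)).symm)
    (mpr_heq _ _)

lemma tupMVHom_app_neg {p : κ} (hp : ¬ σ p = i) :
    (tupMVHom α σ A i e₁ e₂ g h : tupMV α σ A i e₁ ⟶ tupMV α σ A i e₂) p =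
      eqToHom (congrArg (toSign (α p)) (if_neg hp)) ≫ toSignHom (signId (α p) (A (σ p))) ≫
        eqToHom (congrArg (toSign (α p)) (if_neg hp)).symm := by
  simp only [tupMVHom, hp, dite_false]
  exact toSignHom_eq_of_heq
    ((if_neg hp : (if σ p = i then e₁ (α p) else A (σ p)) = A (σ p)).symm)
    ((if_neg hp : (if σ p = i then e₂ (α p) else A (σ p)) = A (σ p)).symm)
    (mpr_heq _ _)
end TupMV
set_option linter.unusedSectionVars false

section ChainProof

variable {B : Type u} [Category.{v} B] {C : Type u'} [Category.{v'} C]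
  {w : ℕ → ℕ} {α : ∀ j : ℕ, Fin (w j) → Bool} {n : ℕ → ℕ} {l : ℕ}

/-- Object of `B` attached to a Boolean label: `false ↦ X`, `true ↦ Y`. -/
abbrev obL (X Y : B) : Bool → B := fun b => bif b then Y else X

/-- The canonical morphism between labelled objects, in the direction given by the sign. -/
def lEntry {X Y : B} (f : X ⟶ Y) :
    ∀ (s a b : Bool), (cond s (a ≤ b) (b ≤ a) : Prop) → SignHom s (obL X Y a) (obL X Y b)
  | true, false, false, _ => 𝟙 X
  | true, false, true, _ => f
  | true, true, true, _ => 𝟙 Y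
  | true, true, false, h => absurd h (by simp)
  | false, false, false, _ => 𝟙 X
  | false, true, false, _ => f
  | false, true, true, _ => 𝟙 Y
  | false, false, true, h => absurd h (by simp)

lemma lEntry_refl {X Y : B} (f : X ⟶ Y) (s a : Bool) (h) :
    lEntry f s a a h = signId s (obL X Y a) := by
  cases s <;> cases a <;> rfl

lemma lEntry_congr {X Y : B} (f : X ⟶ Y) {s a b a' b' : Bool} (ha : a = a') (hb : b = b')
    (h : (cond s (a ≤ b) (b ≤ a) : Prop)) (h' : (cond s (a' ≤ b') (b' ≤ a') : Prop)) :
    lEntry f s a b h = scast (congrArg (obL X Y) ha).symm (congrArg (obL X Y) hb).symm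
      (lEntry f s a' b' h') := by
  subst ha; subst hb; rfl

variable (ξ : ∀ j : ℕ, Fin (n j) → Fin l) (i : Fin l) (A : Fin l → B) (X Y : B) (f : X ⟶ Y)

/-- A labelling of all variables of the chain. -/
abbrev Lab (n : ℕ → ℕ) : Type := ∀ jj : ℕ, Fin (n jj) → Bool

/-- The tuple of objects fed to `φ j` under a stage labelling `g`. -/
abbrev tA1 (j : ℕ) (g : Fin (n j) → Bool) : Fin (n j) → B :=
  fun y => if ξ j y = i then obL X Y (g y) else A (ξ j y)

variable (σ : ∀ j : ℕ, Fin (w j) → Fin (n j)) (τ : ∀ j : ℕ, Fin (w (j + 1)) → Fin (n j))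
  (k : ℕ)

/-- Validity of a pair of labellings across the interface `j`/`j+1`. -/
abbrev BOk (j : ℕ) (g : Fin (n j) → Bool) (g' : Fin (n (j + 1)) → Bool) : Prop :=
  ∀ p : Fin (w (j + 1)), ξ j (τ j p) = i →
    (cond (α (j + 1) p) (g (τ j p) ≤ g' (σ (j + 1) p)) (g' (σ (j + 1) p) ≤ g (τ j p)) : Prop)

/-- Global validity of a labelling. -/
abbrev ValidL (L : Lab n) : Prop := ∀ j, j < k → BOk (α := α) ξ i σ τ j (L j) (L (j + 1))

variable (hcomm : ∀ j, j < k → ∀ p, ξ j (τ j p) = ξ (j + 1) (σ (j + 1) p))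

/-- Entry of the interface bridge between stages `j` and `j+1`. -/
def bEnt (j : ℕ) (hj : j < k) (g : Fin (n j) → Bool) (g' : Fin (n (j + 1)) → Bool)
    (hok : BOk (α := α) ξ i σ τ j g g') (p : Fin (w (j + 1))) :
    SignHom (α (j + 1) p) (tA1 ξ i A X Y j g (τ j p)) (tA1 ξ i A X Y (j + 1) g' (σ (j + 1) p)) :=
  if hi : ξ j (τ j p) = i then
    scast (show obL X Y (g (τ j p)) = tA1 ξ i A X Y j g (τ j p) from (if_pos hi).symm)
      (show obL X Y (g' (σ (j + 1) p)) = tA1 ξ i A X Y (j + 1) g' (σ (j + 1) p) from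
        (if_pos ((hcomm j hj p).symm.trans hi)).symm)
      (lEntry f (α (j + 1) p) (g (τ j p)) (g' (σ (j + 1) p)) (hok p hi))
  else
    scast (show A (ξ j (τ j p)) = tA1 ξ i A X Y j g (τ j p) from (if_neg hi).symm)
      (show A (ξ j (τ j p)) = tA1 ξ i A X Y (j + 1) g' (σ (j + 1) p) from
        (congrArg A (hcomm j hj p)).trans
          (if_neg (fun hc => hi ((hcomm j hj p).trans hc))).symm)
      (signId (α (j + 1) p) (A (ξ j (τ j p))))

/-- The interface bridge between stages `j` and `j+1`. -/
def bridge1 (j : ℕ) (hj : j < k) (g : Fin (n j) → Bool) (g' : Fin (n (j + 1)) → Bool)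
    (hok : BOk (α := α) ξ i σ τ j g g') :
    (tup (α (j + 1)) (τ j) (tA1 ξ i A X Y j g) : PowCat B (α (j + 1))) ⟶
      tup (α (j + 1)) (σ (j + 1)) (tA1 ξ i A X Y (j + 1) g') :=
  fun p => toSignHom (bEnt ξ i A X Y f σ τ k hcomm j hj g g' hok p)

/-- The source object of the composite dinaturality hexagon. -/
abbrev startObj : PowCat B (α 0) :=
  tupMV (α 0) (fun p => ξ 0 (σ 0 p)) A i (fun s => bif s then X else Y)

/-- The target object of the composite dinaturality hexagon. -/
abbrev endObj : PowCat B (α (k + 1)) :=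
  tupMV (α (k + 1)) (fun p => ξ k (τ k p)) A i (fun s => bif s then Y else X)

lemma obL_not (s : Bool) : (bif s then X else Y) = obL X Y (!s) := by cases s <;> rfl

lemma obL_self (s : Bool) : (bif s then Y else X) = obL X Y s := rfl

/-- Entry of the map from the hexagon source into the stage-0 tuple. -/
def inEnt (g0 : Fin (n 0) → Bool) (p : Fin (w 0)) :
    SignHom (α 0 p)
      (if ξ 0 (σ 0 p) = i then (bif α 0 p then X else Y) else A (ξ 0 (σ 0 p)))
      (tA1 ξ i A X Y 0 g0 (σ 0 p)) :=
  if hi : ξ 0 (σ 0 p) = i then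
    scast ((obL_not X Y (α 0 p)).symm.trans (if_pos hi).symm) ((if_pos hi).symm)
      (lEntry f (α 0 p) (!(α 0 p)) (g0 (σ 0 p)) (by cases α 0 p <;> simp))
  else
    scast ((if_neg hi).symm) ((if_neg hi).symm) (signId (α 0 p) (A (ξ 0 (σ 0 p))))

def inHom (g0 : Fin (n 0) → Bool) :
    (startObj ξ i A X Y σ : PowCat B (α 0)) ⟶ tup (α 0) (σ 0) (tA1 ξ i A X Y 0 g0) :=
  fun p => toSignHom (inEnt ξ i A X Y f σ g0 p)

/-- Entry of the map from the stage-k tuple to the hexagon target. -/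
def outEnt (gk : Fin (n k) → Bool) (p : Fin (w (k + 1))) :
    SignHom (α (k + 1) p) (tA1 ξ i A X Y k gk (τ k p))
      (if ξ k (τ k p) = i then (bif α (k + 1) p then Y else X) else A (ξ k (τ k p))) :=
  if hi : ξ k (τ k p) = i then
    scast ((if_pos hi).symm) ((obL_self X Y (α (k + 1) p)).symm.trans (if_pos hi).symm)
      (lEntry f (α (k + 1) p) (gk (τ k p)) (α (k + 1) p) (by cases α (k + 1) p <;> simp))
  else
    scast ((if_neg hi).symm) ((if_neg hi).symm) (signId (α (k + 1) p) (A (ξ k (τ k p))))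

def outHom (gk : Fin (n k) → Bool) :
    (tup (α (k + 1)) (τ k) (tA1 ξ i A X Y k gk) : PowCat B (α (k + 1))) ⟶
      endObj ξ i A X Y τ k :=
  fun p => toSignHom (outEnt ξ i A X Y f τ k gk p)

variable (F : ∀ j : ℕ, PowCat B (α j) ⥤ C)
  (φ : ∀ j : ℕ, Transf (α j) (α (j + 1)) (F j) (F (j + 1)) (σ j) (τ j))

/-- The partial composite up to `φ_b`, with labelling `L`. -/
def Mseg (L : Lab n) (hL : ValidL (α := α) ξ i σ τ k L) :
    ∀ b : ℕ, b ≤ k →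
      ((F 0).obj (startObj ξ i A X Y σ) ⟶
        (F (b + 1)).obj (tup (α (b + 1)) (τ b) (tA1 ξ i A X Y b (L b))))
  | 0, _ => (F 0).map (inHom ξ i A X Y f σ (L 0)) ≫ φ 0 (tA1 ξ i A X Y 0 (L 0))
  | b + 1, hb =>
      Mseg L hL b (Nat.le_of_succ_le hb) ≫
        (F (b + 1)).map (bridge1 ξ i A X Y f σ τ k hcomm b hb (L b) (L (b + 1)) (hL b hb)) ≫
        φ (b + 1) (tA1 ξ i A X Y (b + 1) (L (b + 1)))

/-- The full composite with labelling `L`. -/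
def Mstate (L : Lab n) (hL : ValidL (α := α) ξ i σ τ k L) :
    (F 0).obj (startObj ξ i A X Y σ) ⟶ (F (k + 1)).obj (endObj ξ i A X Y τ k) :=
  Mseg ξ i A X Y f σ τ k hcomm F φ L hL k le_rfl ≫ (F (k + 1)).map (outHom ξ i A X Y f τ k (L k))

end ChainProof
section ChainProof2

variable {B : Type u} [Category.{v} B] {C : Type u'} [Category.{v'} C]
  {w : ℕ → ℕ} {α : ∀ j : ℕ, Fin (w j) → Bool} {n : ℕ → ℕ} {l : ℕ}
  (ξ : ∀ j : ℕ, Fin (n j) → Fin l) (i : Fin l) (A : Fin l → B) (X Y : B) (f : X ⟶ Y)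
  (σ : ∀ j : ℕ, Fin (w j) → Fin (n j)) (τ : ∀ j : ℕ, Fin (w (j + 1)) → Fin (n j))
  (k : ℕ)
  (hcomm : ∀ j, j < k → ∀ p, ξ j (τ j p) = ξ (j + 1) (σ (j + 1) p))
  (F : ∀ j : ℕ, PowCat B (α j) ⥤ C)
  (φ : ∀ j : ℕ, Transf (α j) (α (j + 1)) (F j) (F (j + 1)) (σ j) (τ j))

lemma phi_congr (j : ℕ) {u v : Fin (n j) → B} (h : u = v) :
    φ j u = eqToHom (congrArg (F j).obj (congrArg (tup (α j) (σ j)) h)) ≫ φ j v ≫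
      eqToHom (congrArg ((F (j + 1)).obj) (congrArg (tup (α (j + 1)) (τ j)) h)).symm := by
  subst h; simp

lemma bridge1_congr (j : ℕ) (hj : j < k) {g₁ g₂ : Fin (n j) → Bool}
    {g₁' g₂' : Fin (n (j + 1)) → Bool} (e : g₁ = g₂) (e' : g₁' = g₂')
    (h₁ : BOk (α := α) ξ i σ τ j g₁ g₁') (h₂ : BOk (α := α) ξ i σ τ j g₂ g₂') :
    bridge1 ξ i A X Y f σ τ k hcomm j hj g₁ g₁' h₁ =
      eqToHom (by rw [e]) ≫ bridge1 ξ i A X Y f σ τ k hcomm j hj g₂ g₂' h₂ ≫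
        eqToHom (by rw [e']) := by
  subst e; subst e'; simp

lemma inHom_congr {g₁ g₂ : Fin (n 0) → Bool} (e : g₁ = g₂) :
    inHom (α := α) ξ i A X Y f σ g₁ =
      inHom (α := α) ξ i A X Y f σ g₂ ≫ eqToHom (by rw [e]) := by
  subst e; simp

lemma outHom_congr {g₁ g₂ : Fin (n k) → Bool} (e : g₁ = g₂) :
    outHom (α := α) ξ i A X Y f τ k g₁ =
      eqToHom (by rw [e]) ≫ outHom (α := α) ξ i A X Y f τ k g₂ := by
  subst e; simp

lemma Mseg_congr (L₁ L₂ : Lab n) (hL₁ : ValidL (α := α) ξ i σ τ k L₁)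
    (hL₂ : ValidL (α := α) ξ i σ τ k L₂) :
    ∀ (b : ℕ) (hb : b ≤ k) (h : ∀ jj, jj ≤ b → L₁ jj = L₂ jj),
      Mseg ξ i A X Y f σ τ k hcomm F φ L₁ hL₁ b hb =
        Mseg ξ i A X Y f σ τ k hcomm F φ L₂ hL₂ b hb ≫ eqToHom (by rw [h b le_rfl]) := by
  intro b
  induction b with
  | zero =>
    intro hb h
    simp only [Mseg]
    rw [inHom_congr ξ i A X Y f σ (h 0 le_rfl),
      phi_congr σ τ F φ 0 (congrArg (tA1 ξ i A X Y 0) (h 0 le_rfl))]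
    simp [eqToHom_map]
  | succ b ih =>
    intro hb h
    simp only [Mseg]
    rw [ih (Nat.le_of_succ_le hb) (fun jj hjj => h jj (Nat.le_succ_of_le hjj)),
      bridge1_congr ξ i A X Y f σ τ k hcomm b hb (h b (Nat.le_succ _)) (h (b + 1) le_rfl)
        (hL₁ b hb) (hL₂ b hb),
      phi_congr σ τ F φ (b + 1) (congrArg (tA1 ξ i A X Y (b + 1)) (h (b + 1) le_rfl))]
    simp [eqToHom_map]

end ChainProof2
section ChainProof3

variable {B : Type u} [Category.{v} B] {C : Type u'} [Category.{v'} C]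
  {w : ℕ → ℕ} {α : ∀ j : ℕ, Fin (w j) → Bool} {n : ℕ → ℕ} {l : ℕ}
  (ξ : ∀ j : ℕ, Fin (n j) → Fin l) (i : Fin l) (A : Fin l → B) (X Y : B) (f : X ⟶ Y)
  (σ : ∀ j : ℕ, Fin (w j) → Fin (n j)) (τ : ∀ j : ℕ, Fin (w (j + 1)) → Fin (n j))
  (k : ℕ)
  (hcomm : ∀ j, j < k → ∀ p, ξ j (τ j p) = ξ (j + 1) (σ (j + 1) p))

lemma keyInX (s : Bool) (h) :
    lEntry f s (!s) false h =
      scast (obL_not X Y s) rfl (mvHom (e₁ := fun s => bif s then X else Y) (e₂ := fun _ => X) f (𝟙 X) s) := by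
  cases s <;> rfl

lemma keyInY (s : Bool) (h) :
    lEntry f s (!s) true h =
      scast (obL_not X Y s) rfl (mvHom (e₁ := fun s => bif s then X else Y) (e₂ := fun _ => Y) (𝟙 Y) f s) := by
  cases s <;> rfl

lemma keyOutX (s : Bool) (h) :
    lEntry f s false s h =
      scast rfl (obL_self X Y s) (mvHom (e₁ := fun _ => X) (e₂ := fun s => bif s then Y else X) (𝟙 X) f s) := by
  cases s <;> rfl

lemma keyOutY (s : Bool) (h) :
    lEntry f s true s h =
      scast rfl (obL_self X Y s) (mvHom (e₁ := fun _ => Y) (e₂ := fun s => bif s then Y else X) f (𝟙 Y) s) := by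
  cases s <;> rfl

lemma bridge1_id (j : ℕ) (hj : j < k) (g : Fin (n j) → Bool) (g' : Fin (n (j + 1)) → Bool)
    (hok : BOk (α := α) ξ i σ τ j g g')
    (hgg : ∀ p : Fin (w (j + 1)), ξ j (τ j p) = i → g (τ j p) = g' (σ (j + 1) p))
    (e : (tup (α (j + 1)) (τ j) (tA1 ξ i A X Y j g) : PowCat B (α (j + 1))) =
      tup (α (j + 1)) (σ (j + 1)) (tA1 ξ i A X Y (j + 1) g')) :
    bridge1 ξ i A X Y f σ τ k hcomm j hj g g' hok = eqToHom e := by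
  funext p
  rw [peq_app]
  show toSignHom (bEnt ξ i A X Y f σ τ k hcomm j hj g g' hok p) = _
  by_cases hi : ξ j (τ j p) = i
  · simp only [bEnt]
    rw [dif_pos hi, toSignHom_scast,
      lEntry_congr f rfl (hgg p hi).symm _ (by cases α (j + 1) p <;> exact le_rfl),
      lEntry_refl, toSignHom_scast, toSignHom_signId]
    simp
  · simp only [bEnt]
    rw [dif_neg hi, toSignHom_scast, toSignHom_signId]
    simp

lemma inHom_X (g0 : Fin (n 0) → Bool) (h0 : ∀ y, ξ 0 y = i → g0 y = false)
    (e : (tupMV (α 0) (fun p => ξ 0 (σ 0 p)) A i (fun _ => X) : PowCat B (α 0)) =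
      tup (α 0) (σ 0) (tA1 ξ i A X Y 0 g0)) :
    inHom (α := α) ξ i A X Y f σ g0 =
      tupMVHom (α 0) (fun p => ξ 0 (σ 0 p)) A i (fun s => bif s then X else Y) (fun _ => X)
        f (𝟙 X) ≫ eqToHom e := by
  funext p
  rw [pcomp_app, peq_app]
  show toSignHom (inEnt ξ i A X Y f σ g0 p) = _
  by_cases hi : ξ 0 (σ 0 p) = i
  · rw [tupMVHom_app_pos (α := α 0) (σ := fun p => ξ 0 (σ 0 p)) _ _ _ _ _ _ hi]
    simp only [inEnt]
    rw [dif_pos hi, lEntry_congr f rfl (h0 _ hi) _ (by cases α 0 p <;> simp),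
      keyInX X Y f (α 0 p) _]
    simp [toSignHom_scast]
  · rw [tupMVHom_app_neg (α := α 0) (σ := fun p => ξ 0 (σ 0 p)) _ _ _ _ _ _ hi]
    simp only [inEnt]
    rw [dif_neg hi, toSignHom_scast, toSignHom_signId]
    simp

lemma inHom_Y (g0 : Fin (n 0) → Bool) (h0 : ∀ y, ξ 0 y = i → g0 y = true)
    (e : (tupMV (α 0) (fun p => ξ 0 (σ 0 p)) A i (fun _ => Y) : PowCat B (α 0)) =
      tup (α 0) (σ 0) (tA1 ξ i A X Y 0 g0)) :
    inHom (α := α) ξ i A X Y f σ g0 =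
      tupMVHom (α 0) (fun p => ξ 0 (σ 0 p)) A i (fun s => bif s then X else Y) (fun _ => Y)
        (𝟙 Y) f ≫ eqToHom e := by
  funext p
  rw [pcomp_app, peq_app]
  show toSignHom (inEnt ξ i A X Y f σ g0 p) = _
  by_cases hi : ξ 0 (σ 0 p) = i
  · rw [tupMVHom_app_pos (α := α 0) (σ := fun p => ξ 0 (σ 0 p)) _ _ _ _ _ _ hi]
    simp only [inEnt]
    rw [dif_pos hi, lEntry_congr f rfl (h0 _ hi) _ (by cases α 0 p <;> simp),
      keyInY X Y f (α 0 p) _]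
    simp [toSignHom_scast]
  · rw [tupMVHom_app_neg (α := α 0) (σ := fun p => ξ 0 (σ 0 p)) _ _ _ _ _ _ hi]
    simp only [inEnt]
    rw [dif_neg hi, toSignHom_scast, toSignHom_signId]
    simp

lemma outHom_X (gk : Fin (n k) → Bool) (h0 : ∀ y, ξ k y = i → gk y = false)
    (e : (tup (α (k + 1)) (τ k) (tA1 ξ i A X Y k gk) : PowCat B (α (k + 1))) =
      tupMV (α (k + 1)) (fun p => ξ k (τ k p)) A i (fun _ => X)) :
    outHom (α := α) ξ i A X Y f τ k gk =
      eqToHom e ≫ tupMVHom (α (k + 1)) (fun p => ξ k (τ k p)) A i (fun _ => X)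
        (fun s => bif s then Y else X) (𝟙 X) f := by
  funext p
  rw [pcomp_app, peq_app]
  show toSignHom (outEnt ξ i A X Y f τ k gk p) = _
  by_cases hi : ξ k (τ k p) = i
  · rw [tupMVHom_app_pos (α := α (k + 1)) (σ := fun p => ξ k (τ k p)) _ _ _ _ _ _ hi]
    simp only [outEnt]
    rw [dif_pos hi, lEntry_congr f (h0 _ hi) rfl _ (by cases α (k + 1) p <;> simp),
      keyOutX X Y f (α (k + 1) p) _]
    simp [toSignHom_scast]
  · rw [tupMVHom_app_neg (α := α (k + 1)) (σ := fun p => ξ k (τ k p)) _ _ _ _ _ _ hi]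
    simp only [outEnt]
    rw [dif_neg hi, toSignHom_scast, toSignHom_signId]
    simp

lemma outHom_Y (gk : Fin (n k) → Bool) (h0 : ∀ y, ξ k y = i → gk y = true)
    (e : (tup (α (k + 1)) (τ k) (tA1 ξ i A X Y k gk) : PowCat B (α (k + 1))) =
      tupMV (α (k + 1)) (fun p => ξ k (τ k p)) A i (fun _ => Y)) :
    outHom (α := α) ξ i A X Y f τ k gk =
      eqToHom e ≫ tupMVHom (α (k + 1)) (fun p => ξ k (τ k p)) A i (fun _ => Y)
        (fun s => bif s then Y else X) f (𝟙 Y) := by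
  funext p
  rw [pcomp_app, peq_app]
  show toSignHom (outEnt ξ i A X Y f τ k gk p) = _
  by_cases hi : ξ k (τ k p) = i
  · rw [tupMVHom_app_pos (α := α (k + 1)) (σ := fun p => ξ k (τ k p)) _ _ _ _ _ _ hi]
    simp only [outEnt]
    rw [dif_pos hi, lEntry_congr f (h0 _ hi) rfl _ (by cases α (k + 1) p <;> simp),
      keyOutY X Y f (α (k + 1) p) _]
    simp [toSignHom_scast]
  · rw [tupMVHom_app_neg (α := α (k + 1)) (σ := fun p => ξ k (τ k p)) _ _ _ _ _ _ hi]
    simp only [outEnt]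
    rw [dif_neg hi, toSignHom_scast, toSignHom_signId]
    simp

end ChainProof3
section ChainProof4

variable {B : Type u} [Category.{v} B] {C : Type u'} [Category.{v'} C]
  {w : ℕ → ℕ} {α : ∀ j : ℕ, Fin (w j) → Bool} {n : ℕ → ℕ} {l : ℕ}
  (ξ : ∀ j : ℕ, Fin (n j) → Fin l) (i : Fin l) (A : Fin l → B) (X Y : B) (f : X ⟶ Y)
  (σ : ∀ j : ℕ, Fin (w j) → Fin (n j)) (τ : ∀ j : ℕ, Fin (w (j + 1)) → Fin (n j))
  (k : ℕ)
  (hcomm : ∀ j, j < k → ∀ p, ξ j (τ j p) = ξ (j + 1) (σ (j + 1) p))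
  (F : ∀ j : ℕ, PowCat B (α j) ⥤ C)
  (φ : ∀ j : ℕ, Transf (α j) (α (j + 1)) (F j) (F (j + 1)) (σ j) (τ j))

/-- The all-unfired labelling. -/
abbrev Lbot : Lab n := fun _ _ => false

lemma Lbot_valid : ValidL (α := α) ξ i σ τ k (Lbot) :=
  fun j _ p _ => by cases α (j + 1) p <;> exact le_rfl

lemma tA1_eq_updX (j : ℕ) (g : Fin (n j) → Bool) (hg : ∀ y, ξ j y = i → g y = false) :
    tA1 ξ i A X Y j g = fun y => upd A i X (ξ j y) :=
  funext fun y => by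
    by_cases hi : ξ j y = i
    · simp only [tA1, upd, if_pos hi, hg y hi]; rfl
    · simp only [tA1, upd, if_neg hi]

lemma tA1_eq_updY (j : ℕ) (g : Fin (n j) → Bool) (hg : ∀ y, ξ j y = i → g y = true) :
    tA1 ξ i A X Y j g = fun y => upd A i Y (ξ j y) :=
  funext fun y => by
    by_cases hi : ξ j y = i
    · simp only [tA1, upd, if_pos hi, hg y hi]; rfl
    · simp only [tA1, upd, if_neg hi]

lemma tup_bridge_eq (hco : ∀ j, j < k → ∀ p, ξ j (τ j p) = ξ (j + 1) (σ (j + 1) p))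
    (u : Fin l → B) (b : ℕ) (hb : b < k) :
    (tup (α (b + 1)) (τ b) (fun y => u (ξ b y)) : PowCat B (α (b + 1))) =
      tup (α (b + 1)) (σ (b + 1)) (fun y => u (ξ (b + 1) y)) :=
  funext fun p => congrArg (toSign (α (b + 1) p)) (congrArg u (hco b hb p))

lemma Mseg_bot (b : ℕ) (hb : b ≤ k) :
    Mseg ξ i A X Y f σ τ k hcomm F φ Lbot (Lbot_valid ξ i σ τ k) b hb =
      (F 0).map (tupMVHom (α 0) (fun p => ξ 0 (σ 0 p)) A i (fun s => bif s then X else Y)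
        (fun _ => X) f (𝟙 X)) ≫
      chain F σ τ ξ φ hcomm (upd A i X) (b + 1) (Nat.succ_le_succ hb) := by
  induction b with
  | zero =>
    simp only [Mseg, chain, chainTransf]
    rw [inHom_X ξ i A X Y f σ (Lbot 0) (fun _ _ => rfl) rfl,
      phi_congr σ τ F φ 0 (tA1_eq_updX ξ i A X Y 0 (Lbot 0) (fun _ _ => rfl))]
    simp [eqToHom_map, Tm]
  | succ b ih =>
    simp only [Mseg, chain]
    rw [ih (Nat.le_of_succ_le hb)]
    rw [bridge1_id ξ i A X Y f σ τ k hcomm b hb (Lbot b) (Lbot (b + 1)) _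
      (fun _ _ => rfl)
      ((congrArg (tup (α (b + 1)) (τ b)) (tA1_eq_updX ξ i A X Y b (Lbot b) (fun _ _ => rfl))).trans
        ((tup_bridge_eq ξ σ τ k hcomm (upd A i X) b hb).trans
          (congrArg (tup (α (b + 1)) (σ (b + 1)))
            (tA1_eq_updX ξ i A X Y (b + 1) (Lbot (b + 1)) (fun _ _ => rfl)).symm))),
      phi_congr σ τ F φ (b + 1) (tA1_eq_updX ξ i A X Y (b + 1) (Lbot (b + 1)) (fun _ _ => rfl))]
    simp only [chain]
    simp [eqToHom_map, Tm]

lemma Mstate_bot :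
    Mstate ξ i A X Y f σ τ k hcomm F φ Lbot (Lbot_valid ξ i σ τ k) =
      (F 0).map (tupMVHom (α 0) (fun p => ξ 0 (σ 0 p)) A i (fun s => bif s then X else Y)
        (fun _ => X) f (𝟙 X)) ≫
      chainTransf F σ τ ξ φ k hcomm (upd A i X) ≫
      (F (k + 1)).map (tupMVHom (α (k + 1)) (fun p => ξ k (τ k p)) A i (fun _ => X)
        (fun s => bif s then Y else X) (𝟙 X) f) := by
  simp only [Mstate, chainTransf]
  rw [Mseg_bot, outHom_X ξ i A X Y f τ k (Lbot k) (fun _ _ => rfl) rfl]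
  simp [eqToHom_map, Tm]
  exact Category.assoc _ _ _

lemma Mseg_top (L : Lab n) (hL : ValidL (α := α) ξ i σ τ k L)
    (hall : ∀ jj, jj ≤ k → ∀ y, ξ jj y = i → L jj y = true) (b : ℕ) (hb : b ≤ k) :
    Mseg ξ i A X Y f σ τ k hcomm F φ L hL b hb =
      (F 0).map (tupMVHom (α 0) (fun p => ξ 0 (σ 0 p)) A i (fun s => bif s then X else Y)
        (fun _ => Y) (𝟙 Y) f) ≫
      chain F σ τ ξ φ hcomm (upd A i Y) (b + 1) (Nat.succ_le_succ hb) ≫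
      eqToHom (congrArg (F (b + 1)).obj (congrArg (tup (α (b + 1)) (τ b))
        (tA1_eq_updY ξ i A X Y b (L b) (fun y hy => hall b hb y hy)).symm)) := by
  induction b with
  | zero =>
    simp only [Mseg, chain, chainTransf]
    rw [inHom_Y ξ i A X Y f σ (L 0) (fun y hy => hall 0 (Nat.zero_le _) y hy)
      (congrArg (tup (α 0) (σ 0))
        (tA1_eq_updY ξ i A X Y 0 (L 0) (fun y hy => hall 0 (Nat.zero_le _) y hy)).symm),
      phi_congr σ τ F φ 0 (tA1_eq_updY ξ i A X Y 0 (L 0) (fun y hy => hall 0 (Nat.zero_le _) y hy))]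
    simp [eqToHom_map, Tm]
  | succ b ih =>
    simp only [Mseg, chain]
    rw [ih (Nat.le_of_succ_le hb) ]
    rw [bridge1_id ξ i A X Y f σ τ k hcomm b hb (L b) (L (b + 1)) _
      (fun p hi => (hall b (Nat.le_of_succ_le hb) _ hi).trans
        (hall (b + 1) hb _ ((hcomm b hb p).symm.trans hi)).symm)
      ((congrArg (tup (α (b + 1)) (τ b))
        (tA1_eq_updY ξ i A X Y b (L b) (fun y hy => hall b (Nat.le_of_succ_le hb) y hy))).trans
        ((tup_bridge_eq ξ σ τ k hcomm (upd A i Y) b hb).trans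
          (congrArg (tup (α (b + 1)) (σ (b + 1)))
            (tA1_eq_updY ξ i A X Y (b + 1) (L (b + 1)) (fun y hy => hall (b + 1) hb y hy)).symm))),
      phi_congr σ τ F φ (b + 1)
        (tA1_eq_updY ξ i A X Y (b + 1) (L (b + 1)) (fun y hy => hall (b + 1) hb y hy))]
    simp only [chain]
    simp [eqToHom_map, Tm]
    erw [eqToHom_trans_assoc]

lemma Mstate_top (L : Lab n) (hL : ValidL (α := α) ξ i σ τ k L)
    (hall : ∀ jj, jj ≤ k → ∀ y, ξ jj y = i → L jj y = true) :
    Mstate ξ i A X Y f σ τ k hcomm F φ L hL =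
      (F 0).map (tupMVHom (α 0) (fun p => ξ 0 (σ 0 p)) A i (fun s => bif s then X else Y)
        (fun _ => Y) (𝟙 Y) f) ≫
      chainTransf F σ τ ξ φ k hcomm (upd A i Y) ≫
      (F (k + 1)).map (tupMVHom (α (k + 1)) (fun p => ξ k (τ k p)) A i (fun _ => Y)
        (fun s => bif s then Y else X) f (𝟙 Y)) := by
  simp only [Mstate, chainTransf]
  rw [Mseg_top ξ i A X Y f σ τ k hcomm F φ L hL hall k le_rfl,
    outHom_Y ξ i A X Y f τ k (L k) (fun y hy => hall k le_rfl y hy)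
      (congrArg (tup (α (k + 1)) (τ k))
        (tA1_eq_updY ξ i A X Y k (L k) (fun y hy => hall k le_rfl y hy)))]
  simp [eqToHom_map, Tm]
  erw [Category.assoc, eqToHom_trans_assoc, eqToHom_refl, Category.id_comp]

end ChainProof4
section ChainProof5

variable {B : Type u} [Category.{v} B] {C : Type u'} [Category.{v'} C]
  {w : ℕ → ℕ} {α : ∀ j : ℕ, Fin (w j) → Bool} {n : ℕ → ℕ} {l : ℕ}
  (ξ : ∀ j : ℕ, Fin (n j) → Fin l) (i : Fin l) (A : Fin l → B) (X Y : B) (f : X ⟶ Y)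
  (σ : ∀ j : ℕ, Fin (w j) → Fin (n j)) (τ : ∀ j : ℕ, Fin (w (j + 1)) → Fin (n j))
  (k : ℕ)
  (hcomm : ∀ j, j < k → ∀ p, ξ j (τ j p) = ξ (j + 1) (σ (j + 1) p))

/-- Fire the variable `x`: set its label to `true`. -/
abbrev Lup {j : ℕ} (x : Fin (n j)) (g : Fin (n j) → Bool) : Fin (n j) → Bool :=
  fun y => if y = x then true else g y

/-- Entry of the corner map into the incoming hexagon corner, at an interior stage. -/
def CinEnt (m : ℕ) (hm : m < k) (x : Fin (n (m + 1))) (hξx : ξ (m + 1) x = i)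
    (g : Fin (n m) → Bool) (gx : Fin (n (m + 1)) → Bool)
    (hok : BOk (α := α) ξ i σ τ m g gx) (hgx : gx x = false)
    (hdn : ∀ q : Fin (w (m + 1)), α (m + 1) q = false → σ (m + 1) q = x → g (τ m q) = true)
    (p : Fin (w (m + 1))) :
    SignHom (α (m + 1) p) (tA1 ξ i A X Y m g (τ m p))
      (if σ (m + 1) p = x then (bif α (m + 1) p then X else Y)
       else tA1 ξ i A X Y (m + 1) gx (σ (m + 1) p)) :=
  if hx : σ (m + 1) p = x then
    scast (show obL X Y (g (τ m p)) = tA1 ξ i A X Y m g (τ m p) from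
        (if_pos ((hcomm m hm p).trans ((congrArg (ξ (m + 1)) hx).trans hξx))).symm)
      ((obL_not X Y (α (m + 1) p)).symm.trans (if_pos hx).symm)
      (lEntry f (α (m + 1) p) (g (τ m p)) (!(α (m + 1) p))
        (by
          have hiτ : ξ m (τ m p) = i :=
            (hcomm m hm p).trans ((congrArg (ξ (m + 1)) hx).trans hξx)
          cases hα : α (m + 1) p
          · simp [hdn p hα hx]
          · have h1 := hok p hiτ
            rw [hα] at h1
            rw [hx, hgx] at h1
            simpa using h1))
  else
    scast rfl ((if_neg hx).symm) (bEnt ξ i A X Y f σ τ k hcomm m hm g gx hok p)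

/-- The corner map into the incoming hexagon corner, at an interior stage. -/
def CinI (m : ℕ) (hm : m < k) (x : Fin (n (m + 1))) (hξx : ξ (m + 1) x = i)
    (g : Fin (n m) → Bool) (gx : Fin (n (m + 1)) → Bool)
    (hok : BOk (α := α) ξ i σ τ m g gx) (hgx : gx x = false)
    (hdn : ∀ q : Fin (w (m + 1)), α (m + 1) q = false → σ (m + 1) q = x → g (τ m q) = true) :
    (tup (α (m + 1)) (τ m) (tA1 ξ i A X Y m g) : PowCat B (α (m + 1))) ⟶
      tupMV (α (m + 1)) (σ (m + 1)) (tA1 ξ i A X Y (m + 1) gx) x (fun s => bif s then X else Y) :=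
  fun p => toSignHom (CinEnt ξ i A X Y f σ τ k hcomm m hm x hξx g gx hok hgx hdn p)

lemma finX (m : ℕ) (hm : m < k) (x : Fin (n (m + 1))) (hξx : ξ (m + 1) x = i)
    (g : Fin (n m) → Bool) (gx : Fin (n (m + 1)) → Bool)
    (hok : BOk (α := α) ξ i σ τ m g gx) (hgx : gx x = false)
    (hdn : ∀ q : Fin (w (m + 1)), α (m + 1) q = false → σ (m + 1) q = x → g (τ m q) = true)
    (hupdX : upd (tA1 ξ i A X Y (m + 1) gx) x X = tA1 ξ i A X Y (m + 1) gx) :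
    bridge1 ξ i A X Y f σ τ k hcomm m hm g gx hok =
      CinI ξ i A X Y f σ τ k hcomm m hm x hξx g gx hok hgx hdn ≫
        (tupMVHom (α (m + 1)) (σ (m + 1)) (tA1 ξ i A X Y (m + 1) gx) x
          (fun s => bif s then X else Y) (fun _ => X) f (𝟙 X) ≫
         eqToHom (congrArg (tup (α (m + 1)) (σ (m + 1))) hupdX)) := by
  funext p
  rw [pcomp_app, pcomp_app, peq_app]
  show toSignHom _ = toSignHom _ ≫ _ ≫ _
  by_cases hx : σ (m + 1) p = x
  · have hiτ : ξ m (τ m p) = i :=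
      (hcomm m hm p).trans ((congrArg (ξ (m + 1)) hx).trans hξx)
    rw [tupMVHom_app_pos _ _ _ _ _ _ _ _ hx]
    simp only [bEnt, CinEnt]
    rw [dif_pos hiτ, dif_pos hx]
    have hgτ : g (τ m p) = !(α (m + 1) p) := by
      cases hα : α (m + 1) p
      · simp [hdn p hα hx]
      · have h1 := hok p hiτ
        rw [hα] at h1
        rw [hx, hgx] at h1
        simp only [cond_true] at h1
        cases hgval : g (τ m p)
        · rfl
        · rw [hgval] at h1; exact absurd h1 (by decide)
    rw [lEntry_congr f hgτ ((congrArg gx hx).trans hgx) (hok p hiτ)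
        (by cases α (m + 1) p <;> simp),
      keyInX X Y f (α (m + 1) p) _,
      lEntry_congr f hgτ rfl _ (by cases α (m + 1) p <;> exact le_rfl),
      lEntry_refl]
    simp [toSignHom_scast, toSignHom_signId]
  · rw [tupMVHom_app_neg _ _ _ _ _ _ _ _ hx]
    simp only [CinEnt]
    rw [dif_neg hx]
    rw [toSignHom_scast, toSignHom_signId]
    simp [toSignHom_scast]

lemma finY (m : ℕ) (hm : m < k) (x : Fin (n (m + 1))) (hξx : ξ (m + 1) x = i)
    (g : Fin (n m) → Bool) (gx : Fin (n (m + 1)) → Bool)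
    (hok : BOk (α := α) ξ i σ τ m g gx) (hgx : gx x = false)
    (hdn : ∀ q : Fin (w (m + 1)), α (m + 1) q = false → σ (m + 1) q = x → g (τ m q) = true)
    (hok' : BOk (α := α) ξ i σ τ m g (Lup x gx))
    (hupdY : upd (tA1 ξ i A X Y (m + 1) gx) x Y = tA1 ξ i A X Y (m + 1) (Lup x gx)) :
    bridge1 ξ i A X Y f σ τ k hcomm m hm g (Lup x gx) hok' =
      CinI ξ i A X Y f σ τ k hcomm m hm x hξx g gx hok hgx hdn ≫
        (tupMVHom (α (m + 1)) (σ (m + 1)) (tA1 ξ i A X Y (m + 1) gx) x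
          (fun s => bif s then X else Y) (fun _ => Y) (𝟙 Y) f ≫
         eqToHom (congrArg (tup (α (m + 1)) (σ (m + 1))) hupdY)) := by
  funext p
  rw [pcomp_app, pcomp_app, peq_app]
  show toSignHom _ = toSignHom _ ≫ _ ≫ _
  by_cases hx : σ (m + 1) p = x
  · have hiτ : ξ m (τ m p) = i :=
      (hcomm m hm p).trans ((congrArg (ξ (m + 1)) hx).trans hξx)
    rw [tupMVHom_app_pos _ _ _ _ _ _ _ _ hx]
    simp only [bEnt, CinEnt]
    rw [dif_pos hiτ, dif_pos hx]
    have hgτ : g (τ m p) = !(α (m + 1) p) := by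
      cases hα : α (m + 1) p
      · simp [hdn p hα hx]
      · have h1 := hok p hiτ
        rw [hα] at h1
        rw [hx, hgx] at h1
        simp only [cond_true] at h1
        cases hgval : g (τ m p)
        · rfl
        · rw [hgval] at h1; exact absurd h1 (by decide)
    have hbY : Lup x gx (σ (m + 1) p) = true := by rw [hx]; simp
    rw [lEntry_congr f hgτ hbY (hok' p hiτ) (by cases α (m + 1) p <;> simp),
      keyInY X Y f (α (m + 1) p) _,
      lEntry_congr f hgτ rfl _ (by cases α (m + 1) p <;> exact le_rfl),
      lEntry_refl]
    simp [toSignHom_scast, toSignHom_signId]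
  · rw [tupMVHom_app_neg _ _ _ _ _ _ _ _ hx]
    simp only [bEnt, CinEnt]
    rw [dif_neg hx]
    have hgg : Lup x gx (σ (m + 1) p) = gx (σ (m + 1) p) := if_neg hx
    by_cases hiτ : ξ m (τ m p) = i
    · rw [dif_pos hiτ, dif_pos hiτ,
        lEntry_congr f rfl hgg (hok' p hiτ) (by rw [← hgg]; exact hok' p hiτ)]
      simp [toSignHom_scast, toSignHom_signId]
    · rw [dif_neg hiτ, dif_neg hiτ]
      simp [toSignHom_scast, toSignHom_signId]

end ChainProof5
section ChainProof6

variable {B : Type u} [Category.{v} B] {C : Type u'} [Category.{v'} C]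
  {w : ℕ → ℕ} {α : ∀ j : ℕ, Fin (w j) → Bool} {n : ℕ → ℕ} {l : ℕ}
  (ξ : ∀ j : ℕ, Fin (n j) → Fin l) (i : Fin l) (A : Fin l → B) (X Y : B) (f : X ⟶ Y)
  (σ : ∀ j : ℕ, Fin (w j) → Fin (n j)) (τ : ∀ j : ℕ, Fin (w (j + 1)) → Fin (n j))
  (k : ℕ)
  (hcomm : ∀ j, j < k → ∀ p, ξ j (τ j p) = ξ (j + 1) (σ (j + 1) p))

/-- Entry of the corner map out of the outgoing hexagon corner, at an interior stage. -/
def CoutEnt (jo : ℕ) (hjo : jo < k) (x : Fin (n jo)) (hξx : ξ jo x = i)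
    (gx : Fin (n jo) → Bool) (g' : Fin (n (jo + 1)) → Bool)
    (hok2 : BOk (α := α) ξ i σ τ jo gx g') (hgx : gx x = false)
    (hup : ∀ q : Fin (w (jo + 1)), α (jo + 1) q = true → τ jo q = x →
      g' (σ (jo + 1) q) = true)
    (q : Fin (w (jo + 1))) :
    SignHom (α (jo + 1) q)
      (if τ jo q = x then (bif α (jo + 1) q then Y else X) else tA1 ξ i A X Y jo gx (τ jo q))
      (tA1 ξ i A X Y (jo + 1) g' (σ (jo + 1) q)) :=
  if hx : τ jo q = x then
    scast ((obL_self X Y (α (jo + 1) q)).symm.trans (if_pos hx).symm)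
      ((if_pos ((hcomm jo hjo q).symm.trans ((congrArg (ξ jo) hx).trans hξx))).symm)
      (lEntry f (α (jo + 1) q) (α (jo + 1) q) (g' (σ (jo + 1) q))
        (by
          have hi'' : ξ jo (τ jo q) = i := (congrArg (ξ jo) hx).trans hξx
          cases hα : α (jo + 1) q
          · have h1 := hok2 q hi''
            rw [hα] at h1
            rw [hx, hgx] at h1
            simpa using h1
          · simp [hup q hα hx]))
  else
    scast ((if_neg hx).symm) rfl (bEnt ξ i A X Y f σ τ k hcomm jo hjo gx g' hok2 q)

/-- The corner map out of the outgoing hexagon corner, at an interior stage. -/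
def CoutI (jo : ℕ) (hjo : jo < k) (x : Fin (n jo)) (hξx : ξ jo x = i)
    (gx : Fin (n jo) → Bool) (g' : Fin (n (jo + 1)) → Bool)
    (hok2 : BOk (α := α) ξ i σ τ jo gx g') (hgx : gx x = false)
    (hup : ∀ q : Fin (w (jo + 1)), α (jo + 1) q = true → τ jo q = x →
      g' (σ (jo + 1) q) = true) :
    (tupMV (α (jo + 1)) (τ jo) (tA1 ξ i A X Y jo gx) x (fun s => bif s then Y else X) :
      PowCat B (α (jo + 1))) ⟶ tup (α (jo + 1)) (σ (jo + 1)) (tA1 ξ i A X Y (jo + 1) g') :=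
  fun q => toSignHom (CoutEnt ξ i A X Y f σ τ k hcomm jo hjo x hξx gx g' hok2 hgx hup q)

lemma foutX (jo : ℕ) (hjo : jo < k) (x : Fin (n jo)) (hξx : ξ jo x = i)
    (gx : Fin (n jo) → Bool) (g' : Fin (n (jo + 1)) → Bool)
    (hok2 : BOk (α := α) ξ i σ τ jo gx g') (hgx : gx x = false)
    (hup : ∀ q : Fin (w (jo + 1)), α (jo + 1) q = true → τ jo q = x →
      g' (σ (jo + 1) q) = true)
    (hupdX : upd (tA1 ξ i A X Y jo gx) x X = tA1 ξ i A X Y jo gx) :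
    bridge1 ξ i A X Y f σ τ k hcomm jo hjo gx g' hok2 =
      (eqToHom (congrArg (tup (α (jo + 1)) (τ jo)) hupdX).symm ≫
        tupMVHom (α (jo + 1)) (τ jo) (tA1 ξ i A X Y jo gx) x (fun _ => X)
          (fun s => bif s then Y else X) (𝟙 X) f) ≫
      CoutI ξ i A X Y f σ τ k hcomm jo hjo x hξx gx g' hok2 hgx hup := by
  funext q
  rw [pcomp_app, pcomp_app, peq_app]
  show toSignHom _ = (_ ≫ _) ≫ toSignHom _
  by_cases hx : τ jo q = x
  · have hi'' : ξ jo (τ jo q) = i := (congrArg (ξ jo) hx).trans hξx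
    rw [tupMVHom_app_pos _ _ _ _ _ _ _ _ hx]
    simp only [bEnt, CoutEnt]
    rw [dif_pos hi'', dif_pos hx]
    have hg' : g' (σ (jo + 1) q) = α (jo + 1) q := by
      cases hα : α (jo + 1) q
      · have h1 := hok2 q hi''
        rw [hα] at h1
        rw [hx, hgx] at h1
        simp only [cond_false] at h1
        cases hgval : g' (σ (jo + 1) q)
        · rfl
        · rw [hgval] at h1; exact absurd h1 (by decide)
      · exact hup q hα hx
    rw [lEntry_congr f ((congrArg gx hx).trans hgx) hg' (hok2 q hi'')
        (by cases α (jo + 1) q <;> simp),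
      keyOutX X Y f (α (jo + 1) q) _,
      lEntry_congr f rfl hg' _ (by cases α (jo + 1) q <;> exact le_rfl),
      lEntry_refl]
    simp [toSignHom_scast, toSignHom_signId]
  · rw [tupMVHom_app_neg _ _ _ _ _ _ _ _ hx]
    simp only [CoutEnt]
    rw [dif_neg hx]
    rw [toSignHom_scast, toSignHom_signId]
    simp [toSignHom_scast]

lemma foutY (jo : ℕ) (hjo : jo < k) (x : Fin (n jo)) (hξx : ξ jo x = i)
    (gx : Fin (n jo) → Bool) (g' : Fin (n (jo + 1)) → Bool)
    (hok2 : BOk (α := α) ξ i σ τ jo gx g') (hgx : gx x = false)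
    (hup : ∀ q : Fin (w (jo + 1)), α (jo + 1) q = true → τ jo q = x →
      g' (σ (jo + 1) q) = true)
    (hok2' : BOk (α := α) ξ i σ τ jo (Lup x gx) g')
    (hupdY : upd (tA1 ξ i A X Y jo gx) x Y = tA1 ξ i A X Y jo (Lup x gx)) :
    bridge1 ξ i A X Y f σ τ k hcomm jo hjo (Lup x gx) g' hok2' =
      (eqToHom (congrArg (tup (α (jo + 1)) (τ jo)) hupdY).symm ≫
        tupMVHom (α (jo + 1)) (τ jo) (tA1 ξ i A X Y jo gx) x (fun _ => Y)
          (fun s => bif s then Y else X) f (𝟙 Y)) ≫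
      CoutI ξ i A X Y f σ τ k hcomm jo hjo x hξx gx g' hok2 hgx hup := by
  funext q
  rw [pcomp_app, pcomp_app, peq_app]
  show toSignHom _ = (_ ≫ _) ≫ toSignHom _
  by_cases hx : τ jo q = x
  · have hi'' : ξ jo (τ jo q) = i := (congrArg (ξ jo) hx).trans hξx
    rw [tupMVHom_app_pos _ _ _ _ _ _ _ _ hx]
    simp only [bEnt, CoutEnt]
    rw [dif_pos hi'', dif_pos hx]
    have hg' : g' (σ (jo + 1) q) = α (jo + 1) q := by
      cases hα : α (jo + 1) q
      · have h1 := hok2 q hi''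
        rw [hα] at h1
        rw [hx, hgx] at h1
        simp only [cond_false] at h1
        cases hgval : g' (σ (jo + 1) q)
        · rfl
        · rw [hgval] at h1; exact absurd h1 (by decide)
      · exact hup q hα hx
    have haY : Lup x gx (τ jo q) = true := by rw [hx]; simp
    rw [lEntry_congr f haY hg' (hok2' q hi'') (by cases α (jo + 1) q <;> simp),
      keyOutY X Y f (α (jo + 1) q) _,
      lEntry_congr f rfl hg' _ (by cases α (jo + 1) q <;> exact le_rfl),
      lEntry_refl]
    simp [toSignHom_scast, toSignHom_signId]
  · rw [tupMVHom_app_neg _ _ _ _ _ _ _ _ hx]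
    simp only [bEnt, CoutEnt]
    rw [dif_neg hx]
    have hgg : Lup x gx (τ jo q) = gx (τ jo q) := if_neg hx
    by_cases hi'' : ξ jo (τ jo q) = i
    · rw [dif_pos hi'', dif_pos hi'',
        lEntry_congr f hgg rfl (hok2' q hi'') (by rw [← hgg]; exact hok2' q hi'')]
      simp [toSignHom_scast, toSignHom_signId]
    · rw [dif_neg hi'', dif_neg hi'']
      simp [toSignHom_scast, toSignHom_signId]

end ChainProof6
section ChainProof7

variable {B : Type u} [Category.{v} B] {C : Type u'} [Category.{v'} C]
  {w : ℕ → ℕ} {α : ∀ j : ℕ, Fin (w j) → Bool} {n : ℕ → ℕ} {l : ℕ}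
  (ξ : ∀ j : ℕ, Fin (n j) → Fin l) (i : Fin l) (A : Fin l → B) (X Y : B) (f : X ⟶ Y)
  (σ : ∀ j : ℕ, Fin (w j) → Fin (n j)) (τ : ∀ j : ℕ, Fin (w (j + 1)) → Fin (n j))
  (k : ℕ)
  (hcomm : ∀ j, j < k → ∀ p, ξ j (τ j p) = ξ (j + 1) (σ (j + 1) p))

/-- Entry of the corner map into the incoming hexagon corner at stage `0`. -/
def Cin0Ent (x : Fin (n 0)) (hξx : ξ 0 x = i) (gx : Fin (n 0) → Bool)
    (p : Fin (w 0)) :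
    SignHom (α 0 p)
      (if ξ 0 (σ 0 p) = i then (bif α 0 p then X else Y) else A (ξ 0 (σ 0 p)))
      (if σ 0 p = x then (bif α 0 p then X else Y) else tA1 ξ i A X Y 0 gx (σ 0 p)) :=
  if hx : σ 0 p = x then
    scast ((obL_not X Y (α 0 p)).symm.trans (if_pos ((congrArg (ξ 0) hx).trans hξx)).symm)
      ((obL_not X Y (α 0 p)).symm.trans (if_pos hx).symm)
      (signId (α 0 p) (obL X Y (!(α 0 p))))
  else
    scast rfl ((if_neg hx).symm) (inEnt ξ i A X Y f σ gx p)

def Cin0 (x : Fin (n 0)) (hξx : ξ 0 x = i) (gx : Fin (n 0) → Bool) :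
    (startObj ξ i A X Y σ : PowCat B (α 0)) ⟶
      tupMV (α 0) (σ 0) (tA1 ξ i A X Y 0 gx) x (fun s => bif s then X else Y) :=
  fun p => toSignHom (Cin0Ent ξ i A X Y f σ x hξx gx p)

lemma fin0X (x : Fin (n 0)) (hξx : ξ 0 x = i) (gx : Fin (n 0) → Bool) (hgx : gx x = false)
    (hupdX : upd (tA1 ξ i A X Y 0 gx) x X = tA1 ξ i A X Y 0 gx) :
    inHom (α := α) ξ i A X Y f σ gx =
      Cin0 ξ i A X Y f σ x hξx gx ≫
        (tupMVHom (α 0) (σ 0) (tA1 ξ i A X Y 0 gx) x (fun s => bif s then X else Y)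
          (fun _ => X) f (𝟙 X) ≫
         eqToHom (congrArg (tup (α 0) (σ 0)) hupdX)) := by
  funext p
  rw [pcomp_app, pcomp_app, peq_app]
  show toSignHom _ = toSignHom _ ≫ _ ≫ _
  by_cases hx : σ 0 p = x
  · have hi : ξ 0 (σ 0 p) = i := (congrArg (ξ 0) hx).trans hξx
    rw [tupMVHom_app_pos _ _ _ _ _ _ _ _ hx]
    simp only [inEnt, Cin0Ent]
    rw [dif_pos hi, dif_pos hx]
    rw [lEntry_congr f rfl ((congrArg gx hx).trans hgx) _ (by cases α 0 p <;> simp),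
      keyInX X Y f (α 0 p) _]
    simp [toSignHom_scast, toSignHom_signId]
  · rw [tupMVHom_app_neg _ _ _ _ _ _ _ _ hx]
    simp only [Cin0Ent]
    rw [dif_neg hx]
    rw [toSignHom_scast, toSignHom_signId]
    simp [toSignHom_scast]

lemma fin0Y (x : Fin (n 0)) (hξx : ξ 0 x = i) (gx : Fin (n 0) → Bool) (hgx : gx x = false)
    (hupdY : upd (tA1 ξ i A X Y 0 gx) x Y = tA1 ξ i A X Y 0 (Lup x gx)) :
    inHom (α := α) ξ i A X Y f σ (Lup x gx) =
      Cin0 ξ i A X Y f σ x hξx gx ≫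
        (tupMVHom (α 0) (σ 0) (tA1 ξ i A X Y 0 gx) x (fun s => bif s then X else Y)
          (fun _ => Y) (𝟙 Y) f ≫
         eqToHom (congrArg (tup (α 0) (σ 0)) hupdY)) := by
  funext p
  rw [pcomp_app, pcomp_app, peq_app]
  show toSignHom _ = toSignHom _ ≫ _ ≫ _
  by_cases hx : σ 0 p = x
  · have hi : ξ 0 (σ 0 p) = i := (congrArg (ξ 0) hx).trans hξx
    rw [tupMVHom_app_pos _ _ _ _ _ _ _ _ hx]
    simp only [inEnt, Cin0Ent]
    rw [dif_pos hi, dif_pos hx]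
    have hbY : Lup x gx (σ 0 p) = true := by rw [hx]; simp
    rw [lEntry_congr f rfl hbY _ (by cases α 0 p <;> simp),
      keyInY X Y f (α 0 p) _]
    simp [toSignHom_scast, toSignHom_signId]
  · rw [tupMVHom_app_neg _ _ _ _ _ _ _ _ hx]
    simp only [inEnt, Cin0Ent]
    rw [dif_neg hx]
    have hgg : Lup x gx (σ 0 p) = gx (σ 0 p) := if_neg hx
    by_cases hi : ξ 0 (σ 0 p) = i
    · rw [dif_pos hi, dif_pos hi,
        lEntry_congr f rfl hgg _ (by cases α 0 p <;> simp)]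
      simp [toSignHom_scast, toSignHom_signId]
    · rw [dif_neg hi, dif_neg hi]
      simp [toSignHom_scast, toSignHom_signId]

/-- Entry of the corner map out of the outgoing hexagon corner at stage `k`. -/
def CoutkEnt (x : Fin (n k)) (hξx : ξ k x = i) (gx : Fin (n k) → Bool)
    (q : Fin (w (k + 1))) :
    SignHom (α (k + 1) q)
      (if τ k q = x then (bif α (k + 1) q then Y else X) else tA1 ξ i A X Y k gx (τ k q))
      (if ξ k (τ k q) = i then (bif α (k + 1) q then Y else X) else A (ξ k (τ k q))) :=
  if hx : τ k q = x then
    scast ((obL_self X Y (α (k + 1) q)).symm.trans (if_pos hx).symm)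
      ((obL_self X Y (α (k + 1) q)).symm.trans
        (if_pos ((congrArg (ξ k) hx).trans hξx)).symm)
      (signId (α (k + 1) q) (obL X Y (α (k + 1) q)))
  else
    scast ((if_neg hx).symm) rfl (outEnt ξ i A X Y f τ k gx q)

def Coutk (x : Fin (n k)) (hξx : ξ k x = i) (gx : Fin (n k) → Bool) :
    (tupMV (α (k + 1)) (τ k) (tA1 ξ i A X Y k gx) x (fun s => bif s then Y else X) :
      PowCat B (α (k + 1))) ⟶ endObj ξ i A X Y τ k :=
  fun q => toSignHom (CoutkEnt ξ i A X Y f τ k x hξx gx q)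

lemma foutkX (x : Fin (n k)) (hξx : ξ k x = i) (gx : Fin (n k) → Bool) (hgx : gx x = false)
    (hupdX : upd (tA1 ξ i A X Y k gx) x X = tA1 ξ i A X Y k gx) :
    outHom (α := α) ξ i A X Y f τ k gx =
      (eqToHom (congrArg (tup (α (k + 1)) (τ k)) hupdX).symm ≫
        tupMVHom (α (k + 1)) (τ k) (tA1 ξ i A X Y k gx) x (fun _ => X)
          (fun s => bif s then Y else X) (𝟙 X) f) ≫
      Coutk ξ i A X Y f τ k x hξx gx := by
  funext q
  rw [pcomp_app, pcomp_app, peq_app]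
  show toSignHom _ = (_ ≫ _) ≫ toSignHom _
  by_cases hx : τ k q = x
  · have hi : ξ k (τ k q) = i := (congrArg (ξ k) hx).trans hξx
    rw [tupMVHom_app_pos _ _ _ _ _ _ _ _ hx]
    simp only [outEnt, CoutkEnt]
    rw [dif_pos hi, dif_pos hx]
    rw [lEntry_congr f ((congrArg gx hx).trans hgx) rfl _ (by cases α (k + 1) q <;> simp),
      keyOutX X Y f (α (k + 1) q) _]
    simp [toSignHom_scast, toSignHom_signId]
  · rw [tupMVHom_app_neg _ _ _ _ _ _ _ _ hx]
    simp only [CoutkEnt]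
    rw [dif_neg hx]
    rw [toSignHom_scast, toSignHom_signId]
    simp [toSignHom_scast]

lemma foutkY (x : Fin (n k)) (hξx : ξ k x = i) (gx : Fin (n k) → Bool) (hgx : gx x = false)
    (hupdY : upd (tA1 ξ i A X Y k gx) x Y = tA1 ξ i A X Y k (Lup x gx)) :
    outHom (α := α) ξ i A X Y f τ k (Lup x gx) =
      (eqToHom (congrArg (tup (α (k + 1)) (τ k)) hupdY).symm ≫
        tupMVHom (α (k + 1)) (τ k) (tA1 ξ i A X Y k gx) x (fun _ => Y)
          (fun s => bif s then Y else X) f (𝟙 Y)) ≫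
      Coutk ξ i A X Y f τ k x hξx gx := by
  funext q
  rw [pcomp_app, pcomp_app, peq_app]
  show toSignHom _ = (_ ≫ _) ≫ toSignHom _
  by_cases hx : τ k q = x
  · have hi : ξ k (τ k q) = i := (congrArg (ξ k) hx).trans hξx
    rw [tupMVHom_app_pos _ _ _ _ _ _ _ _ hx]
    simp only [outEnt, CoutkEnt]
    rw [dif_pos hi, dif_pos hx]
    have haY : Lup x gx (τ k q) = true := by rw [hx]; simp
    rw [lEntry_congr f haY rfl _ (by cases α (k + 1) q <;> simp),
      keyOutY X Y f (α (k + 1) q) _]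
    simp [toSignHom_scast, toSignHom_signId]
  · rw [tupMVHom_app_neg _ _ _ _ _ _ _ _ hx]
    simp only [outEnt, CoutkEnt]
    rw [dif_neg hx]
    have hgg : Lup x gx (τ k q) = gx (τ k q) := if_neg hx
    by_cases hi : ξ k (τ k q) = i
    · rw [dif_pos hi, dif_pos hi,
        lEntry_congr f hgg rfl _ (by cases α (k + 1) q <;> simp)]
      simp [toSignHom_scast, toSignHom_signId]
    · rw [dif_neg hi, dif_neg hi]
      simp [toSignHom_scast, toSignHom_signId]

end ChainProof7
section ChainProof8

variable {B : Type u} [Category.{v} B] {C : Type u'} [Category.{v'} C]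
  {w : ℕ → ℕ} {α : ∀ j : ℕ, Fin (w j) → Bool} {n : ℕ → ℕ} {l : ℕ}
  (ξ : ∀ j : ℕ, Fin (n j) → Fin l) (i : Fin l) (A : Fin l → B) (X Y : B) (f : X ⟶ Y)
  (σ : ∀ j : ℕ, Fin (w j) → Fin (n j)) (τ : ∀ j : ℕ, Fin (w (j + 1)) → Fin (n j))
  (k : ℕ)
  (hcomm : ∀ j, j < k → ∀ p, ξ j (τ j p) = ξ (j + 1) (σ (j + 1) p))
  (F : ∀ j : ℕ, PowCat B (α j) ⥤ C)
  (φ : ∀ j : ℕ, Transf (α j) (α (j + 1)) (F j) (F (j + 1)) (σ j) (τ j))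

lemma updX_eq (j₀ : ℕ) (x : Fin (n j₀)) (hξx : ξ j₀ x = i) (gx : Fin (n j₀) → Bool)
    (hgx : gx x = false) : upd (tA1 ξ i A X Y j₀ gx) x X = tA1 ξ i A X Y j₀ gx :=
  funext fun y => by
    by_cases hyx : y = x
    · subst hyx; simp [upd, tA1, hξx, hgx, obL]
    · simp [upd, hyx]

lemma updY_eq (j₀ : ℕ) (x : Fin (n j₀)) (hξx : ξ j₀ x = i) (gx : Fin (n j₀) → Bool) :
    upd (tA1 ξ i A X Y j₀ gx) x Y = tA1 ξ i A X Y j₀ (Lup x gx) :=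
  funext fun y => by
    by_cases hyx : y = x
    · subst hyx; simp [upd, tA1, hξx, obL, Lup]
    · simp [upd, tA1, hyx, Lup]

lemma BOk_fire_right (m : ℕ) (x : Fin (n (m + 1)))
    (g : Fin (n m) → Bool) (gx : Fin (n (m + 1)) → Bool)
    (hok : BOk (α := α) ξ i σ τ m g gx)
    (hdn : ∀ q : Fin (w (m + 1)), α (m + 1) q = false → σ (m + 1) q = x →
      g (τ m q) = true) :
    BOk (α := α) ξ i σ τ m g (Lup x gx) := by
  intro p hi
  by_cases hxp : σ (m + 1) p = x
  · cases hα : α (m + 1) p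
    · simp only [cond_false]
      have h2 : Lup x gx (σ (m + 1) p) = true := by rw [hxp]; simp
      rw [h2, hdn p hα hxp]
    · simp only [cond_true]
      have h2 : Lup x gx (σ (m + 1) p) = true := by rw [hxp]; simp
      rw [h2]; exact Bool.le_true _
  · have h1 := hok p hi
    have h2 : Lup x gx (σ (m + 1) p) = gx (σ (m + 1) p) := if_neg hxp
    cases hα : α (m + 1) p <;> rw [hα] at h1 <;> simp only [cond_false, cond_true, h2] <;>
      exact h1

lemma BOk_fire_left (jo : ℕ) (x : Fin (n jo))
    (gx : Fin (n jo) → Bool) (g' : Fin (n (jo + 1)) → Bool)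
    (hok2 : BOk (α := α) ξ i σ τ jo gx g')
    (hup : ∀ q : Fin (w (jo + 1)), α (jo + 1) q = true → τ jo q = x →
      g' (σ (jo + 1) q) = true) :
    BOk (α := α) ξ i σ τ jo (Lup x gx) g' := by
  intro q hi
  by_cases hxq : τ jo q = x
  · cases hα : α (jo + 1) q
    · simp only [cond_false]
      have h2 : Lup x gx (τ jo q) = true := by rw [hxq]; simp
      rw [h2]; exact Bool.le_true _
    · simp only [cond_true]
      have h2 : Lup x gx (τ jo q) = true := by rw [hxq]; simp
      rw [h2, hup q hα hxq]
  · have h1 := hok2 q hi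
    have h2 : Lup x gx (τ jo q) = gx (τ jo q) := if_neg hxq
    cases hα : α (jo + 1) q <;> rw [hα] at h1 <;> simp only [cond_false, cond_true, h2] <;>
      exact h1

lemma DCgen (j₀ : ℕ) (x : Fin (n j₀)) (gx : Fin (n j₀) → Bool)
    (hdinj : DinatAt (φ j₀) x)
    (hupdX : upd (tA1 ξ i A X Y j₀ gx) x X = tA1 ξ i A X Y j₀ gx)
    (hupdY : upd (tA1 ξ i A X Y j₀ gx) x Y = tA1 ξ i A X Y j₀ (Lup x gx)) :
    (F j₀).map (tupMVHom (α j₀) (σ j₀) (tA1 ξ i A X Y j₀ gx) x (fun s => bif s then X else Y)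
        (fun _ => X) f (𝟙 X)) ≫
      eqToHom (congrArg (F j₀).obj (congrArg (tup (α j₀) (σ j₀)) hupdX)) ≫
      φ j₀ (tA1 ξ i A X Y j₀ gx) ≫
      eqToHom (congrArg ((F (j₀ + 1)).obj) (congrArg (tup (α (j₀ + 1)) (τ j₀)) hupdX)).symm ≫
      (F (j₀ + 1)).map (tupMVHom (α (j₀ + 1)) (τ j₀) (tA1 ξ i A X Y j₀ gx) x (fun _ => X)
        (fun s => bif s then Y else X) (𝟙 X) f) =
    (F j₀).map (tupMVHom (α j₀) (σ j₀) (tA1 ξ i A X Y j₀ gx) x (fun s => bif s then X else Y)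
        (fun _ => Y) (𝟙 Y) f) ≫
      eqToHom (congrArg (F j₀).obj (congrArg (tup (α j₀) (σ j₀)) hupdY)) ≫
      φ j₀ (tA1 ξ i A X Y j₀ (Lup x gx)) ≫
      eqToHom (congrArg ((F (j₀ + 1)).obj) (congrArg (tup (α (j₀ + 1)) (τ j₀)) hupdY)).symm ≫
      (F (j₀ + 1)).map (tupMVHom (α (j₀ + 1)) (τ j₀) (tA1 ξ i A X Y j₀ gx) x (fun _ => Y)
        (fun s => bif s then Y else X) f (𝟙 Y)) := by
  have E := hdinj (tA1 ξ i A X Y j₀ gx) f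
  rw [phi_congr σ τ F φ j₀ hupdX, phi_congr σ τ F φ j₀ hupdY] at E
  simpa using E

lemma Mseg_ext (L L' : Lab n) (hL : ValidL (α := α) ξ i σ τ k L)
    (hL' : ValidL (α := α) ξ i σ τ k L') (b₀ : ℕ) (hb₀ : b₀ ≤ k)
    (hagree : ∀ jj, b₀ ≤ jj → L' jj = L jj)
    (base : Mseg ξ i A X Y f σ τ k hcomm F φ L hL b₀ hb₀ =
      Mseg ξ i A X Y f σ τ k hcomm F φ L' hL' b₀ hb₀ ≫ eqToHom (by rw [hagree b₀ le_rfl])) :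
    ∀ b (hbb : b₀ ≤ b) (hb : b ≤ k),
      Mseg ξ i A X Y f σ τ k hcomm F φ L hL b hb =
        Mseg ξ i A X Y f σ τ k hcomm F φ L' hL' b hb ≫ eqToHom (by rw [hagree b hbb]) := by
  intro b hbb
  induction b, hbb using Nat.le_induction with
  | base => intro hb; exact base
  | succ b hbb ih =>
    intro hb
    simp only [Mseg]
    rw [ih (Nat.le_of_succ_le hb),
      bridge1_congr ξ i A X Y f σ τ k hcomm b hb (hagree b hbb) (hagree (b + 1) (Nat.le_succ_of_le hbb))
        (hL' b hb) (hL b hb),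
      phi_congr σ τ F φ (b + 1) (congrArg (tA1 ξ i A X Y (b + 1)) (hagree (b + 1) (Nat.le_succ_of_le hbb)))]
    simp [eqToHom_map]

end ChainProof8
section ChainProof9

variable {B : Type u} [Category.{v} B] {C : Type u'} [Category.{v'} C]
  {w : ℕ → ℕ} {α : ∀ j : ℕ, Fin (w j) → Bool} {n : ℕ → ℕ} {l : ℕ}
  (ξ : ∀ j : ℕ, Fin (n j) → Fin l) (i : Fin l) (A : Fin l → B) (X Y : B) (f : X ⟶ Y)
  (σ : ∀ j : ℕ, Fin (w j) → Fin (n j)) (τ : ∀ j : ℕ, Fin (w (j + 1)) → Fin (n j))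
  (k : ℕ)
  (hcomm : ∀ j, j < k → ∀ p, ξ j (τ j p) = ξ (j + 1) (σ (j + 1) p))
  (F : ∀ j : ℕ, PowCat B (α j) ⥤ C)
  (φ : ∀ j : ℕ, Transf (α j) (α (j + 1)) (F j) (F (j + 1)) (σ j) (τ j))

lemma fireS (m : ℕ) (hm1 : m + 1 ≤ k) (x : Fin (n (m + 1))) (hξx : ξ (m + 1) x = i)
    (L : Lab n) (hL : ValidL (α := α) ξ i σ τ k L) (hx0 : L (m + 1) x = false)
    (hdn : ∀ q : Fin (w (m + 1)), α (m + 1) q = false → σ (m + 1) q = x →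
      L m (τ m q) = true)
    (hup : ∀ (hk : m + 1 < k) (q : Fin (w (m + 1 + 1))), α (m + 1 + 1) q = true →
      τ (m + 1) q = x → L (m + 1 + 1) (σ (m + 1 + 1) q) = true)
    (hdinj : DinatAt (φ (m + 1)) x)
    (L' : Lab n) (hne : ∀ jj, jj ≠ m + 1 → L' jj = L jj)
    (hat : L' (m + 1) = Lup x (L (m + 1)))
    (hL' : ValidL (α := α) ξ i σ τ k L') :
    Mstate ξ i A X Y f σ τ k hcomm F φ L hL = Mstate ξ i A X Y f σ τ k hcomm F φ L' hL' := by
  have hupdX := updX_eq ξ i A X Y (m + 1) x hξx (L (m + 1)) hx0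
  have hupdY := updY_eq ξ i A X Y (m + 1) x hξx (L (m + 1))
  have hok : BOk (α := α) ξ i σ τ m (L m) (L (m + 1)) := hL m hm1
  have hok' : BOk (α := α) ξ i σ τ m (L m) (Lup x (L (m + 1))) :=
    BOk_fire_right ξ i σ τ m x (L m) (L (m + 1)) hok hdn
  have hDC := DCgen ξ i A X Y f σ τ F φ (m + 1) x (L (m + 1)) hdinj hupdX hupdY
  -- The two halves of the mid-stage invariant.
  have eX : Mseg ξ i A X Y f σ τ k hcomm F φ L hL (m + 1) hm1 ≫
      (F (m + 1 + 1)).map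
        (eqToHom (congrArg (tup (α (m + 1 + 1)) (τ (m + 1))) hupdX).symm ≫
         tupMVHom (α (m + 1 + 1)) (τ (m + 1)) (tA1 ξ i A X Y (m + 1) (L (m + 1))) x (fun _ => X)
           (fun s => bif s then Y else X) (𝟙 X) f) =
      Mseg ξ i A X Y f σ τ k hcomm F φ L hL m (Nat.le_of_succ_le hm1) ≫
      (F (m + 1)).map (CinI ξ i A X Y f σ τ k hcomm m hm1 x hξx (L m) (L (m + 1)) hok hx0 hdn) ≫
      ((F (m + 1)).map (tupMVHom (α (m + 1)) (σ (m + 1)) (tA1 ξ i A X Y (m + 1) (L (m + 1))) x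
          (fun s => bif s then X else Y) (fun _ => X) f (𝟙 X)) ≫
        eqToHom (congrArg (F (m + 1)).obj (congrArg (tup (α (m + 1)) (σ (m + 1))) hupdX)) ≫
        φ (m + 1) (tA1 ξ i A X Y (m + 1) (L (m + 1))) ≫
        eqToHom (congrArg ((F (m + 1 + 1)).obj) (congrArg (tup (α (m + 1 + 1)) (τ (m + 1))) hupdX)).symm ≫
        (F (m + 1 + 1)).map (tupMVHom (α (m + 1 + 1)) (τ (m + 1)) (tA1 ξ i A X Y (m + 1) (L (m + 1))) x
          (fun _ => X) (fun s => bif s then Y else X) (𝟙 X) f)) := by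
    simp only [Mseg]
    rw [finX ξ i A X Y f σ τ k hcomm m hm1 x hξx (L m) (L (m + 1)) hok hx0 hdn hupdX]
    simp [eqToHom_map]
  have eY : Mseg ξ i A X Y f σ τ k hcomm F φ L' hL' (m + 1) hm1 ≫
      (F (m + 1 + 1)).map
        (eqToHom (congrArg (tup (α (m + 1 + 1)) (τ (m + 1)))
            ((congrArg (tA1 ξ i A X Y (m + 1)) hat).trans hupdY.symm)) ≫
         tupMVHom (α (m + 1 + 1)) (τ (m + 1)) (tA1 ξ i A X Y (m + 1) (L (m + 1))) x (fun _ => Y)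
           (fun s => bif s then Y else X) f (𝟙 Y)) =
      Mseg ξ i A X Y f σ τ k hcomm F φ L hL m (Nat.le_of_succ_le hm1) ≫
      (F (m + 1)).map (CinI ξ i A X Y f σ τ k hcomm m hm1 x hξx (L m) (L (m + 1)) hok hx0 hdn) ≫
      ((F (m + 1)).map (tupMVHom (α (m + 1)) (σ (m + 1)) (tA1 ξ i A X Y (m + 1) (L (m + 1))) x
          (fun s => bif s then X else Y) (fun _ => Y) (𝟙 Y) f) ≫
        eqToHom (congrArg (F (m + 1)).obj (congrArg (tup (α (m + 1)) (σ (m + 1))) hupdY)) ≫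
        φ (m + 1) (tA1 ξ i A X Y (m + 1) (Lup x (L (m + 1)))) ≫
        eqToHom (congrArg ((F (m + 1 + 1)).obj) (congrArg (tup (α (m + 1 + 1)) (τ (m + 1))) hupdY)).symm ≫
        (F (m + 1 + 1)).map (tupMVHom (α (m + 1 + 1)) (τ (m + 1)) (tA1 ξ i A X Y (m + 1) (L (m + 1))) x
          (fun _ => Y) (fun s => bif s then Y else X) f (𝟙 Y))) := by
    simp only [Mseg]
    rw [Mseg_congr ξ i A X Y f σ τ k hcomm F φ L' L hL' hL m (Nat.le_of_succ_le hm1)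
        (fun jj hjj => hne jj (by omega)),
      bridge1_congr ξ i A X Y f σ τ k hcomm m hm1 (hne m (by omega)) hat
        (hL' m hm1) hok',
      finY ξ i A X Y f σ τ k hcomm m hm1 x hξx (L m) (L (m + 1)) hok hx0 hdn hok' hupdY,
      phi_congr σ τ F φ (m + 1) (congrArg (tA1 ξ i A X Y (m + 1)) hat)]
    simp [eqToHom_map]
  by_cases hk : m + 1 = k
  · subst hk
    simp only [Mstate]
    rw [foutkX ξ i A X Y f τ (m + 1) x hξx (L (m + 1)) hx0 hupdX,
      outHom_congr ξ i A X Y f τ (m + 1) hat,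
      foutkY ξ i A X Y f τ (m + 1) x hξx (L (m + 1)) hx0 hupdY]
    have eX2 := eX; have eY2 := eY; have hDC2 := hDC
    simp only [Functor.map_comp, eqToHom_map, Category.assoc] at eX2 eY2 hDC2 ⊢
    erw [reassoc_of% eX2, reassoc_of% hDC2, ← reassoc_of% eY2]
    simp [eqToHom_map]
  · have hklt : m + 1 < k := lt_of_le_of_ne hm1 hk
    have hok2 : BOk (α := α) ξ i σ τ (m + 1) (L (m + 1)) (L (m + 1 + 1)) := hL (m + 1) hklt
    have hok2' : BOk (α := α) ξ i σ τ (m + 1) (Lup x (L (m + 1))) (L (m + 1 + 1)) :=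
      BOk_fire_left ξ i σ τ (m + 1) x (L (m + 1)) (L (m + 1 + 1)) hok2 (hup hklt)
    have base : ∀ (hk2 : m + 1 + 1 ≤ k), Mseg ξ i A X Y f σ τ k hcomm F φ L hL (m + 1 + 1) hk2 =
        Mseg ξ i A X Y f σ τ k hcomm F φ L' hL' (m + 1 + 1) hk2 ≫
          eqToHom (by rw [hne (m + 1 + 1) (by omega)]) := by
      intro hk2
      conv_lhs => rw [Mseg]
      conv_rhs => rw [Mseg]
      rw [foutX ξ i A X Y f σ τ k hcomm (m + 1) hklt x hξx (L (m + 1)) (L (m + 1 + 1)) hok2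
          hx0 (hup hklt) hupdX,
        bridge1_congr ξ i A X Y f σ τ k hcomm (m + 1) hklt hat (hne (m + 1 + 1) (by omega))
          (hL' (m + 1) hklt) hok2',
        foutY ξ i A X Y f σ τ k hcomm (m + 1) hklt x hξx (L (m + 1)) (L (m + 1 + 1)) hok2
          hx0 (hup hklt) hok2' hupdY,
        phi_congr σ τ F φ (m + 1 + 1) (congrArg (tA1 ξ i A X Y (m + 1 + 1)) (hne (m + 1 + 1) (by omega)))]
      have eX2 := eX; have eY2 := eY; have hDC2 := hDC
      simp only [Functor.map_comp, eqToHom_map, Category.assoc] at eX2 eY2 hDC2 ⊢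
      rw [reassoc_of% eX2, reassoc_of% hDC2, ← reassoc_of% eY2]
      simp [eqToHom_map]
    have ext := Mseg_ext ξ i A X Y f σ τ k hcomm F φ L L' hL hL' (m + 1 + 1) hklt
      (fun jj hjj => hne jj (by omega)) (base hklt) k hklt le_rfl
    simp only [Mstate]
    rw [ext, outHom_congr ξ i A X Y f τ k (hne k (by omega))]
    simp [eqToHom_map]

end ChainProof9
section ChainProof10

variable {B : Type u} [Category.{v} B] {C : Type u'} [Category.{v'} C]
  {w : ℕ → ℕ} {α : ∀ j : ℕ, Fin (w j) → Bool} {n : ℕ → ℕ} {l : ℕ}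
  (ξ : ∀ j : ℕ, Fin (n j) → Fin l) (i : Fin l) (A : Fin l → B) (X Y : B) (f : X ⟶ Y)
  (σ : ∀ j : ℕ, Fin (w j) → Fin (n j)) (τ : ∀ j : ℕ, Fin (w (j + 1)) → Fin (n j))
  (k : ℕ)
  (hcomm : ∀ j, j < k → ∀ p, ξ j (τ j p) = ξ (j + 1) (σ (j + 1) p))
  (F : ∀ j : ℕ, PowCat B (α j) ⥤ C)
  (φ : ∀ j : ℕ, Transf (α j) (α (j + 1)) (F j) (F (j + 1)) (σ j) (τ j))

lemma fire0 (x : Fin (n 0)) (hξx : ξ 0 x = i)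
    (L : Lab n) (hL : ValidL (α := α) ξ i σ τ k L) (hx0 : L 0 x = false)
    (hup : ∀ (hk : 0 < k) (q : Fin (w (0 + 1))), α (0 + 1) q = true →
      τ 0 q = x → L (0 + 1) (σ (0 + 1) q) = true)
    (hdinj : DinatAt (φ 0) x)
    (L' : Lab n) (hne : ∀ jj, jj ≠ 0 → L' jj = L jj)
    (hat : L' 0 = Lup x (L 0))
    (hL' : ValidL (α := α) ξ i σ τ k L') :
    Mstate ξ i A X Y f σ τ k hcomm F φ L hL = Mstate ξ i A X Y f σ τ k hcomm F φ L' hL' := by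
  have hupdX := updX_eq ξ i A X Y 0 x hξx (L 0) hx0
  have hupdY := updY_eq ξ i A X Y 0 x hξx (L 0)
  have hDC := DCgen ξ i A X Y f σ τ F φ 0 x (L 0) hdinj hupdX hupdY
  have eX : Mseg ξ i A X Y f σ τ k hcomm F φ L hL 0 (Nat.zero_le k) ≫
      (F (0 + 1)).map
        (eqToHom (congrArg (tup (α (0 + 1)) (τ 0)) hupdX).symm ≫
         tupMVHom (α (0 + 1)) (τ 0) (tA1 ξ i A X Y 0 (L 0)) x (fun _ => X)
           (fun s => bif s then Y else X) (𝟙 X) f) =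
      (F 0).map (Cin0 ξ i A X Y f σ x hξx (L 0)) ≫
      ((F 0).map (tupMVHom (α 0) (σ 0) (tA1 ξ i A X Y 0 (L 0)) x
          (fun s => bif s then X else Y) (fun _ => X) f (𝟙 X)) ≫
        eqToHom (congrArg (F 0).obj (congrArg (tup (α 0) (σ 0)) hupdX)) ≫
        φ 0 (tA1 ξ i A X Y 0 (L 0)) ≫
        eqToHom (congrArg ((F (0 + 1)).obj) (congrArg (tup (α (0 + 1)) (τ 0)) hupdX)).symm ≫
        (F (0 + 1)).map (tupMVHom (α (0 + 1)) (τ 0) (tA1 ξ i A X Y 0 (L 0)) x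
          (fun _ => X) (fun s => bif s then Y else X) (𝟙 X) f)) := by
    simp only [Mseg]
    rw [fin0X ξ i A X Y f σ x hξx (L 0) hx0 hupdX]
    simp [eqToHom_map]
  have eY : Mseg ξ i A X Y f σ τ k hcomm F φ L' hL' 0 (Nat.zero_le k) ≫
      (F (0 + 1)).map
        (eqToHom (congrArg (tup (α (0 + 1)) (τ 0))
            ((congrArg (tA1 ξ i A X Y 0) hat).trans hupdY.symm)) ≫
         tupMVHom (α (0 + 1)) (τ 0) (tA1 ξ i A X Y 0 (L 0)) x (fun _ => Y)
           (fun s => bif s then Y else X) f (𝟙 Y)) =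
      (F 0).map (Cin0 ξ i A X Y f σ x hξx (L 0)) ≫
      ((F 0).map (tupMVHom (α 0) (σ 0) (tA1 ξ i A X Y 0 (L 0)) x
          (fun s => bif s then X else Y) (fun _ => Y) (𝟙 Y) f) ≫
        eqToHom (congrArg (F 0).obj (congrArg (tup (α 0) (σ 0)) hupdY)) ≫
        φ 0 (tA1 ξ i A X Y 0 (Lup x (L 0))) ≫
        eqToHom (congrArg ((F (0 + 1)).obj) (congrArg (tup (α (0 + 1)) (τ 0)) hupdY)).symm ≫
        (F (0 + 1)).map (tupMVHom (α (0 + 1)) (τ 0) (tA1 ξ i A X Y 0 (L 0)) x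
          (fun _ => Y) (fun s => bif s then Y else X) f (𝟙 Y))) := by
    simp only [Mseg]
    rw [inHom_congr ξ i A X Y f σ hat,
      fin0Y ξ i A X Y f σ x hξx (L 0) hx0 hupdY,
      phi_congr σ τ F φ 0 (congrArg (tA1 ξ i A X Y 0) hat)]
    simp [eqToHom_map]
  by_cases hk : 0 = k
  · subst hk
    simp only [Mstate]
    rw [foutkX ξ i A X Y f τ 0 x hξx (L 0) hx0 hupdX,
      outHom_congr ξ i A X Y f τ 0 hat,
      foutkY ξ i A X Y f τ 0 x hξx (L 0) hx0 hupdY]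
    have eX2 := eX; have eY2 := eY; have hDC2 := hDC
    simp only [Functor.map_comp, eqToHom_map, Category.assoc] at eX2 eY2 hDC2 ⊢
    rw [reassoc_of% eX2, reassoc_of% hDC2, ← reassoc_of% eY2]
    simp [eqToHom_map]
  · have hklt : 0 < k := Nat.pos_of_ne_zero (fun h => hk h.symm)
    have hok2 : BOk (α := α) ξ i σ τ 0 (L 0) (L (0 + 1)) := hL 0 hklt
    have hok2' : BOk (α := α) ξ i σ τ 0 (Lup x (L 0)) (L (0 + 1)) :=
      BOk_fire_left ξ i σ τ 0 x (L 0) (L (0 + 1)) hok2 (hup hklt)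
    have base : ∀ (hk2 : 0 + 1 ≤ k), Mseg ξ i A X Y f σ τ k hcomm F φ L hL (0 + 1) hk2 =
        Mseg ξ i A X Y f σ τ k hcomm F φ L' hL' (0 + 1) hk2 ≫
          eqToHom (by rw [hne (0 + 1) (by omega)]) := by
      intro hk2
      conv_lhs => rw [Mseg]
      conv_rhs => rw [Mseg]
      rw [foutX ξ i A X Y f σ τ k hcomm 0 hklt x hξx (L 0) (L (0 + 1)) hok2
          hx0 (hup hklt) hupdX,
        bridge1_congr ξ i A X Y f σ τ k hcomm 0 hklt hat (hne (0 + 1) (by omega))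
          (hL' 0 hklt) hok2',
        foutY ξ i A X Y f σ τ k hcomm 0 hklt x hξx (L 0) (L (0 + 1)) hok2
          hx0 (hup hklt) hok2' hupdY,
        phi_congr σ τ F φ (0 + 1) (congrArg (tA1 ξ i A X Y (0 + 1)) (hne (0 + 1) (by omega)))]
      have eX2 := eX; have eY2 := eY; have hDC2 := hDC
      simp only [Functor.map_comp, eqToHom_map, Category.assoc] at eX2 eY2 hDC2 ⊢
      rw [reassoc_of% eX2, reassoc_of% hDC2, ← reassoc_of% eY2]
      simp [eqToHom_map]
    have ext := Mseg_ext ξ i A X Y f σ τ k hcomm F φ L L' hL hL' (0 + 1) hklt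
      (fun jj hjj => hne jj (by omega)) (base hklt) k hklt le_rfl
    simp only [Mstate]
    rw [ext, outHom_congr ξ i A X Y f τ k (hne k (by omega))]
    simp [eqToHom_map]

end ChainProof10
section ChainProof11

variable {B : Type u} [Category.{v} B] {C : Type u'} [Category.{v'} C]
  {w : ℕ → ℕ} {α : ∀ j : ℕ, Fin (w j) → Bool} {n : ℕ → ℕ} {l : ℕ}
  (ξ : ∀ j : ℕ, Fin (n j) → Fin l) (i : Fin l) (A : Fin l → B) (X Y : B) (f : X ⟶ Y)
  (σ : ∀ j : ℕ, Fin (w j) → Fin (n j)) (τ : ∀ j : ℕ, Fin (w (j + 1)) → Fin (n j))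
  (k : ℕ)

lemma ValidL_fireS (m : ℕ) (x : Fin (n (m + 1)))
    (L : Lab n) (hL : ValidL (α := α) ξ i σ τ k L)
    (hdn : ∀ q : Fin (w (m + 1)), α (m + 1) q = false → σ (m + 1) q = x →
      L m (τ m q) = true)
    (hup : ∀ (hk : m + 1 < k) (q : Fin (w (m + 1 + 1))), α (m + 1 + 1) q = true →
      τ (m + 1) q = x → L (m + 1 + 1) (σ (m + 1 + 1) q) = true)
    (L' : Lab n) (hne : ∀ jj, jj ≠ m + 1 → L' jj = L jj)
    (hat : L' (m + 1) = Lup x (L (m + 1))) :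
    ValidL (α := α) ξ i σ τ k L' := by
  intro j hj
  by_cases h1 : j = m
  · subst h1
    rw [hne j (by omega), hat]
    exact BOk_fire_right ξ i σ τ j x (L j) (L (j + 1)) (hL j hj) hdn
  · by_cases h2 : j = m + 1
    · subst h2
      rw [hat, hne (m + 1 + 1) (by omega)]
      exact BOk_fire_left ξ i σ τ (m + 1) x (L (m + 1)) (L (m + 1 + 1)) (hL (m + 1) hj) (hup hj)
    · rw [hne j h2, hne (j + 1) (by omega)]
      exact hL j hj

lemma ValidL_fire0 (x : Fin (n 0))
    (L : Lab n) (hL : ValidL (α := α) ξ i σ τ k L)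
    (hup : ∀ (hk : 0 < k) (q : Fin (w (0 + 1))), α (0 + 1) q = true →
      τ 0 q = x → L (0 + 1) (σ (0 + 1) q) = true)
    (L' : Lab n) (hne : ∀ jj, jj ≠ 0 → L' jj = L jj)
    (hat : L' 0 = Lup x (L 0)) :
    ValidL (α := α) ξ i σ τ k L' := by
  intro j hj
  by_cases h2 : j = 0
  · subst h2
    rw [hat, hne (0 + 1) (by omega)]
    exact BOk_fire_left ξ i σ τ 0 x (L 0) (L (0 + 1)) (hL 0 hj) (hup hj)
  · rw [hne j h2, hne (j + 1) (by omega)]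
    exact hL j hj

/-- The transitions of the chain up to stage `k`. -/
abbrev Tt (n : ℕ → ℕ) (k : ℕ) : Type := Σ jj : Fin (k + 1), Fin (n jj)

/-- Transitions lying over the component `i`. -/
abbrev Ti : Type := {t : Tt n k // ξ t.1 t.2 = i}

/-- A transition as a vertex of the composite graph. -/
abbrev Tv (t : Ti (n := n) ξ i k) : ChainV w n := Sum.inr ⟨(t.1.1 : ℕ), t.1.2⟩

/-- One transition feeds another through a place. -/
def Rt (a b : Ti (n := n) ξ i k) : Prop :=
  ∃ v : ChainV w n, chainArc k α σ τ (Tv ξ i k a) v ∧ chainArc k α σ τ v (Tv ξ i k b)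

lemma Rt_transGen {a b : Ti (n := n) ξ i k}
    (h : Relation.TransGen (Rt (α := α) (w := w) ξ i σ τ k) a b) :
    Relation.TransGen (chainArc k α σ τ) (Tv ξ i k a) (Tv ξ i k b) := by
  induction h with
  | single h => obtain ⟨v, h1, h2⟩ := h; exact (Relation.TransGen.single h1).tail h2
  | tail _ h2 ih => obtain ⟨v, g1, g2⟩ := h2; exact (ih.tail g1).tail g2

lemma Rt_min (hacyclic : ∀ v : ChainV w n, chainCompOf σ τ ξ v = i →
      ¬ Relation.TransGen (chainArc k α σ τ) v v)
    (U : Finset (Ti (n := n) ξ i k)) (hU : U.Nonempty) :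
    ∃ m ∈ U, ∀ t' ∈ U, ¬ (Rt (α := α) (w := w) ξ i σ τ k) m t' := by
  haveI : IsTrans (Ti (n := n) ξ i k)
      (fun a b => Relation.TransGen (Rt (α := α) (w := w) ξ i σ τ k) b a) :=
    ⟨fun a b c h1 h2 => h2.trans h1⟩
  haveI : IsIrrefl (Ti (n := n) ξ i k)
      (fun a b => Relation.TransGen (Rt (α := α) (w := w) ξ i σ τ k) b a) := by
    refine ⟨fun a h => ?_⟩
    exact hacyclic (Tv ξ i k a) a.2 (Rt_transGen ξ i σ τ k h)
  have wf := Finite.wellFounded_of_trans_of_irrefl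
    (fun a b : Ti (n := n) ξ i k =>
      Relation.TransGen (Rt (α := α) (w := w) ξ i σ τ k) b a)
  obtain ⟨m, hm, hmin⟩ := wf.has_min U hU
  exact ⟨m, hm, fun t' ht' h => hmin t' ht' (Relation.TransGen.single h)⟩

end ChainProof11
section ChainProof12

variable {B : Type u} [Category.{v} B] {C : Type u'} [Category.{v'} C]
  {w : ℕ → ℕ} {α : ∀ j : ℕ, Fin (w j) → Bool} {n : ℕ → ℕ} {l : ℕ}
  (ξ : ∀ j : ℕ, Fin (n j) → Fin l) (i : Fin l) (A : Fin l → B) (X Y : B) (f : X ⟶ Y)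
  (σ : ∀ j : ℕ, Fin (w j) → Fin (n j)) (τ : ∀ j : ℕ, Fin (w (j + 1)) → Fin (n j))
  (k : ℕ)
  (hcomm : ∀ j, j < k → ∀ p, ξ j (τ j p) = ξ (j + 1) (σ (j + 1) p))
  (F : ∀ j : ℕ, PowCat B (α j) ⥤ C)
  (φ : ∀ j : ℕ, Transf (α j) (α (j + 1)) (F j) (F (j + 1)) (σ j) (τ j))

/-- The all-fired labelling on the component `i`. -/
abbrev Lfull : Lab n := fun jj y => decide (ξ jj y = i ∧ jj < k + 1)

lemma Lfull_valid (hco : ∀ j, j < k → ∀ p, ξ j (τ j p) = ξ (j + 1) (σ (j + 1) p)) :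
    ValidL (α := α) ξ i σ τ k (Lfull ξ i k) := by
  intro j hj p hi
  have hi' : ξ (j + 1) (σ (j + 1) p) = i := (hco j hj p).symm.trans hi
  have e1 : Lfull ξ i k j (τ j p) = true := by
    simp only [decide_eq_true_eq]; exact ⟨hi, by omega⟩
  have e2 : Lfull ξ i k (j + 1) (σ (j + 1) p) = true := by
    simp only [decide_eq_true_eq]; exact ⟨hi', by omega⟩
  rw [e1, e2]
  cases α (j + 1) p <;> simp

lemma Ti_eq_iff (t s : Ti (n := n) ξ i k) :
    ((⟨(t.1.1 : ℕ), t.1.2⟩ : Σ jj : ℕ, Fin (n jj)) = ⟨(s.1.1 : ℕ), s.1.2⟩) ↔ t = s := by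
  constructor
  · intro h
    obtain ⟨⟨⟨ja, hja⟩, ya⟩, pa⟩ := t
    obtain ⟨⟨⟨jb, hjb⟩, yb⟩, pb⟩ := s
    have h1 : ja = jb := congrArg Sigma.fst h
    subst h1
    have h2 : ya = yb := by simpa using h
    subst h2
    rfl
  · rintro rfl; rfl

lemma master
    (hacyclic : ∀ v : ChainV w n, chainCompOf σ τ ξ v = i →
      ¬ Relation.TransGen (chainArc k α σ τ) v v)
    (hdin : ∀ j, j ≤ k → ∀ x : Fin (n j), ξ j x = i → DinatAt (φ j) x) :
    ∀ (c : ℕ) (L : Lab n) (hL : ValidL (α := α) ξ i σ τ k L)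
      (hoff : ∀ jj y, L jj y = true → ξ jj y = i ∧ jj < k + 1)
      (hc : (Finset.univ.filter
        (fun t : Ti (n := n) ξ i k => L t.1.1 t.1.2 = false)).card = c),
      Mstate ξ i A X Y f σ τ k hcomm F φ L hL =
        Mstate ξ i A X Y f σ τ k hcomm F φ (Lfull ξ i k) (Lfull_valid ξ i σ τ k hcomm) := by
  intro c
  induction c using Nat.strong_induction_on with
  | _ c IH =>
    intro L hL hoff hc
    rcases c with _ | c'
    · -- everything over `i` is fired
      have hall : ∀ t : Ti (n := n) ξ i k, L t.1.1 t.1.2 = true := by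
        intro t
        by_contra hfalse
        have h1 : L t.1.1 t.1.2 = false := by
          cases hv : L t.1.1 t.1.2
          · rfl
          · exact absurd hv hfalse
        have h2 : t ∈ Finset.univ.filter
            (fun t : Ti (n := n) ξ i k => L t.1.1 t.1.2 = false) := by
          simp [Finset.mem_filter, h1]
        rw [Finset.card_eq_zero.mp hc] at h2
        exact absurd h2 (Finset.notMem_empty t)
      have hLf : L = Lfull ξ i k := by
        funext jj y
        by_cases hov : ξ jj y = i ∧ jj < k + 1
        · have := hall ⟨⟨⟨jj, hov.2⟩, y⟩, hov.1⟩
          rw [this]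
          exact (decide_eq_true hov).symm
        · have h1 : L jj y = false := by
            cases hv : L jj y
            · rfl
            · exact absurd (hoff jj y hv) hov
          rw [h1]
          exact (decide_eq_false hov).symm
      subst hLf
      rfl
    · -- there is an unfired transition over `i`; fire a minimal one
      have hUne : (Finset.univ.filter
          (fun t : Ti (n := n) ξ i k => L t.1.1 t.1.2 = false)).Nonempty := by
        rw [← Finset.card_pos, hc]; omega
      obtain ⟨m, hmU, hmin⟩ := Rt_min ξ i σ τ k hacyclic _ hUne
      obtain ⟨⟨⟨jv, hjv⟩, xv⟩, hξv⟩ := m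
      have hLm : L jv xv = false := by
        simpa [Finset.mem_filter] using hmU
      set L' : Lab n :=
        fun jj y => if (⟨jj, y⟩ : Σ jj : ℕ, Fin (n jj)) = ⟨jv, xv⟩ then true else L jj y
        with hL'def
      have hne : ∀ jj, jj ≠ jv → L' jj = L jj := fun jj hjj =>
        funext fun y => if_neg (fun h => hjj (congrArg Sigma.fst h))
      have hat : L' jv = Lup xv (L jv) := funext fun y => by
        show (if (⟨jv, y⟩ : Σ jj : ℕ, Fin (n jj)) = ⟨jv, xv⟩ then true else L jv y) =
          (if y = xv then true else L jv y)
        by_cases hy : y = xv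
        · subst hy
          rw [if_pos rfl, if_pos rfl]
        · rw [if_neg (fun h => hy (by simpa using h)), if_neg hy]
      have hup : ∀ (hk : jv < k) (q : Fin (w (jv + 1))), α (jv + 1) q = true →
          τ jv q = xv → L (jv + 1) (σ (jv + 1) q) = true := by
        intro hk q hα hτ
        by_contra hfalse
        have hfalse' : L (jv + 1) (σ (jv + 1) q) = false := by
          cases hv : L (jv + 1) (σ (jv + 1) q)
          · rfl
          · exact absurd hv hfalse
        have hξ' : ξ (jv + 1) (σ (jv + 1) q) = i := by
          rw [← hcomm jv hk q, hτ]; exact hξv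
        have ht'U : (⟨⟨⟨jv + 1, by omega⟩, σ (jv + 1) q⟩, hξ'⟩ : Ti (n := n) ξ i k) ∈
            Finset.univ.filter
              (fun t : Ti (n := n) ξ i k => L t.1.1 t.1.2 = false) := by
          simp [Finset.mem_filter, hfalse']
        refine hmin _ ht'U ⟨Sum.inl ⟨jv + 1, q⟩, ?_, ?_⟩
        · exact ⟨by omega, Or.inr ⟨rfl, hτ, hα⟩⟩
        · exact ⟨by omega, Or.inl ⟨rfl, rfl, hα⟩⟩
      have hoff' : ∀ jj y, L' jj y = true → ξ jj y = i ∧ jj < k + 1 := by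
        intro jj y h
        by_cases hcond : (⟨jj, y⟩ : Σ jj : ℕ, Fin (n jj)) = ⟨jv, xv⟩
        · have h1 : jj = jv := congrArg Sigma.fst hcond
          subst h1
          have h2 : y = xv := by simpa using hcond
          subst h2
          exact ⟨hξv, hjv⟩
        · rw [hL'def] at h
          simp only [if_neg hcond] at h
          exact hoff jj y h
      have hfilter : Finset.univ.filter
            (fun t : Ti (n := n) ξ i k => L' t.1.1 t.1.2 = false) =
          (Finset.univ.filter
            (fun t : Ti (n := n) ξ i k => L t.1.1 t.1.2 = false)).erase
            ⟨⟨⟨jv, hjv⟩, xv⟩, hξv⟩ := by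
        ext t
        simp only [Finset.mem_filter, Finset.mem_univ, true_and, Finset.mem_erase]
        constructor
        · intro h
          by_cases hcond : (⟨(t.1.1 : ℕ), t.1.2⟩ : Σ jj : ℕ, Fin (n jj)) = ⟨jv, xv⟩
          · rw [hL'def] at h
            simp only [if_pos hcond] at h
            exact absurd h (by simp)
          · refine ⟨?_, ?_⟩
            · intro he
              exact hcond ((Ti_eq_iff ξ i k t ⟨⟨⟨jv, hjv⟩, xv⟩, hξv⟩).mpr he)
            · rw [hL'def] at h
              simpa only [if_neg hcond] using h
        · rintro ⟨hnet, hLt⟩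
          rw [hL'def]
          simp only
          rw [if_neg (fun hcond =>
            hnet ((Ti_eq_iff ξ i k t ⟨⟨⟨jv, hjv⟩, xv⟩, hξv⟩).mp hcond))]
          exact hLt
      have hcard : (Finset.univ.filter
          (fun t : Ti (n := n) ξ i k => L' t.1.1 t.1.2 = false)).card = c' := by
        rw [hfilter, Finset.card_erase_of_mem hmU, hc]
        rfl
      have hdinj : DinatAt (φ jv) xv := hdin jv (by omega) xv hξv
      -- fire, depending on whether `jv` is the initial stage or not
      by_cases h0 : jv = 0
      · subst h0
        have hLv' : ValidL (α := α) ξ i σ τ k L' :=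
          ValidL_fire0 ξ i σ τ k xv L hL hup L' hne hat
        exact (fire0 ξ i A X Y f σ τ k hcomm F φ xv hξv L hL hLm hup hdinj L' hne hat
          hLv').trans (IH c' (by omega) L' hLv' hoff' hcard)
      · obtain ⟨mm, rfl⟩ : ∃ mm, jv = mm + 1 := ⟨jv - 1, by omega⟩
        have hdn : ∀ q : Fin (w (mm + 1)), α (mm + 1) q = false → σ (mm + 1) q = xv →
            L mm (τ mm q) = true := by
          intro q hα hσq
          by_contra hfalse
          have hfalse' : L mm (τ mm q) = false := by
            cases hv : L mm (τ mm q)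
            · rfl
            · exact absurd hv hfalse
          have hξ'' : ξ mm (τ mm q) = i :=
            (hcomm mm (by omega) q).trans (by rw [hσq]; exact hξv)
          have ht'U : (⟨⟨⟨mm, by omega⟩, τ mm q⟩, hξ''⟩ : Ti (n := n) ξ i k) ∈
              Finset.univ.filter
                (fun t : Ti (n := n) ξ i k => L t.1.1 t.1.2 = false) := by
            simp [Finset.mem_filter, hfalse']
          refine hmin _ ht'U ⟨Sum.inl ⟨mm + 1, q⟩, ?_, ?_⟩
          · exact ⟨by omega, Or.inl ⟨rfl, hσq, hα⟩⟩
          · exact ⟨by omega, Or.inr ⟨rfl, rfl, hα⟩⟩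
        have hLv' : ValidL (α := α) ξ i σ τ k L' :=
          ValidL_fireS ξ i σ τ k mm xv L hL hdn hup L' hne hat
        exact (fireS ξ i A X Y f σ τ k hcomm F φ mm (by omega) xv hξv L hL hLm hdn hup
          hdinj L' hne hat hLv').trans (IH c' (by omega) L' hLv' hoff' hcard)

end ChainProof12

/-- Let `φ_0, …, φ_k` be consecutive transformations whose composite
type is computed by a pasting of pushouts with vertex `Fin l` and induced maps `ξ_j`.
If the `i`-th connected component of the composite graph `Γ(φ_k) ∘ ⋯ ∘ Γ(φ_0)` is
acyclic and each `φ_j` is dinatural in every one of its variables lying over `i`, then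
the vertical composite `φ_k ∘ ⋯ ∘ φ_0` is dinatural in its `i`-th variable. -/
theorem chain_dinatural_of_acyclic_component
    {B : Type u} [Category.{v} B] {C : Type u'} [Category.{v'} C]
    {w : ℕ → ℕ} {α : ∀ j : ℕ, Fin (w j) → Bool} {n : ℕ → ℕ} {l : ℕ}
    (hl : 0 < l) (hn : ∀ j, 0 < n j)
    (F : ∀ j : ℕ, PowCat B (α j) ⥤ C)
    (σ : ∀ j : ℕ, Fin (w j) → Fin (n j))
    (τ : ∀ j : ℕ, Fin (w (j + 1)) → Fin (n j))
    (φ : ∀ j : ℕ, Transf (α j) (α (j + 1)) (F j) (F (j + 1)) (σ j) (τ j))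
    (k : ℕ) (ξ : ∀ j : ℕ, Fin (n j) → Fin l)
    (hcomm : ∀ j, j < k → ∀ p, ξ j (τ j p) = ξ (j + 1) (σ (j + 1) p))
    (hpaste : ∀ (Z : Type) (u : ∀ j : ℕ, Fin (n j) → Z),
      (∀ j, j < k → ∀ p, u j (τ j p) = u (j + 1) (σ (j + 1) p)) →
      ∃! v : Fin l → Z, ∀ j, j ≤ k → ∀ x, v (ξ j x) = u j x)
    (i : Fin l)
    (hacyclic : ∀ v : ChainV w n, chainCompOf σ τ ξ v = i →
      ¬ Relation.TransGen (chainArc k α σ τ) v v)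
    (hdin : ∀ j, j ≤ k → ∀ x : Fin (n j), ξ j x = i → DinatAt (φ j) x) :
    DinatAt (chainTransf F σ τ ξ φ k hcomm) i := by
  intro A X Y f
  have e1 := Mstate_bot ξ i A X Y f σ τ k hcomm F φ
  have hfull := Lfull_valid (α := α) ξ i σ τ k hcomm
  have e2 := Mstate_top ξ i A X Y f σ τ k hcomm F φ (Lfull ξ i k) hfull
    (fun jj hjj y hy => decide_eq_true ⟨hy, by omega⟩)
  have e3 := master ξ i A X Y f σ τ k hcomm F φ hacyclic hdin _ Lbot
    (Lbot_valid ξ i σ τ k) (fun jj y h => absurd h (by simp)) rfl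
  exact e1.symm.trans (e3.trans e2)
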